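/- arXiv:1007.5302 — 3 statements merged into one kernel-verified Lean document; each statement's English description precedes it below -/
import Mathlib

section
/- Let f : ℝ^d → ℝ be bounded and continuous, and define u(t,x) = ∫_{ℝ^d} f(y) K^{BS}(t;x,y) dy for t ∈ (0,∞)ⁿ and x ∈ ℝ^d. Then u is bounded and, for every j ∈ {1,…,n}, every t ∈ (0,∞)ⁿ and every x ∈ ℝ^d, u satisfies the heat-type PDE ∂u/∂t_j (t,x) = (1/2)(∏_{i∈{1,…,n}\{j}} t_i) Δ_x u(t,x). -/
open MeasureTheory Real Filter Finset

noncomputable section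

/-- Partial derivative of `g` in the `k`-th coordinate direction, at `x`. -/
def pd {m : ℕ} {E : Type*} [NormedAddCommGroup E] [NormedSpace ℝ E]
    (k : Fin m) (g : (Fin m → ℝ) → E) (x : Fin m → ℝ) : E :=
  deriv (fun h : ℝ => g (Function.update x k h)) (x k)

/-- The Laplacian of `g : ℝ^m → E`, as the sum of its second coordinate partials. -/
def lap {m : ℕ} {E : Type*} [NormedAddCommGroup E] [NormedSpace ℝ E]
    (g : (Fin m → ℝ) → E) (x : Fin m → ℝ) : E :=
  ∑ k, pd k (pd k g) x

/-- The `n`-parameter `d`-dimensional Brownian sheet kernel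
`K^{BS}(t;x,y) = (2π t₁⋯t_n)^{-d/2} exp(-|x-y|²/(2 t₁⋯t_n))`. -/
def Kbs (n d : ℕ) (t : Fin n → ℝ) (x y : Fin d → ℝ) : ℝ :=
  (2 * π * ∏ i, t i) ^ (-(d : ℝ) / 2) *
    Real.exp (-(∑ k, (x k - y k) ^ 2) / (2 * ∏ i, t i))

/-- The one-dimensional heat (Brownian motion transition) kernel
`K^{BM}(t;0,s) = (2πt)^{-1/2} exp(-s²/(2t))`. -/
def Kbm (t s : ℝ) : ℝ :=
  (2 * π * t) ^ (-(1 : ℝ) / 2) * Real.exp (-(s ^ 2) / (2 * t))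

/-- The `n`-parameter `d`-dimensional complex propagator kernel
`p_{is}(x,y) = (2πi s₁⋯s_n)^{-d/2} exp(-|x-y|²/(2i s₁⋯s_n))` (principal branch). -/
def pProp (n d : ℕ) (s : Fin n → ℝ) (x y : Fin d → ℝ) : ℂ :=
  (2 * (π : ℂ) * Complex.I * ∏ i, (s i : ℂ)) ^ (-(d : ℂ) / 2) *
    Complex.exp (-((∑ k, (x k - y k) ^ 2 : ℝ) : ℂ) /
      (2 * Complex.I * ∏ i, (s i : ℂ)))

namespace BSaux

variable {d : ℕ}

def q (x y : Fin d → ℝ) : ℝ := ∑ k, (x k - y k) ^ 2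

def G (d : ℕ) (c r : ℝ) : ℝ := (2 * π * c) ^ (-(d:ℝ)/2) * Real.exp (-r / (2*c))

lemma q_nonneg (x y : Fin d → ℝ) : 0 ≤ q x y := Finset.sum_nonneg fun _ _ => sq_nonneg _

lemma continuous_q (x : Fin d → ℝ) : Continuous fun y => q x y := by
  unfold q; exact continuous_finset_sum _ fun k _ => ((continuous_const.sub (continuous_apply k)).pow 2)

lemma G_nonneg (hc : 0 < c) (r : ℝ) : 0 ≤ G d c r :=
  mul_nonneg (Real.rpow_nonneg (by positivity) _) (Real.exp_nonneg _)

lemma continuous_G (c : ℝ) : Continuous (G d c) := by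
  unfold G
  exact continuous_const.mul ((continuous_neg.div_const _).rexp)

lemma mul_exp_neg_le {s b : ℝ} (hs : 0 ≤ s) (hb : 0 < b) : s * Real.exp (-(b * s)) ≤ 1 / b := by
  have h1 : b * s ≤ Real.exp (b * s) := by nlinarith [Real.add_one_le_exp (b * s)]
  have h2 : (0:ℝ) < Real.exp (b * s) := Real.exp_pos _
  rw [Real.exp_neg]
  have h3 : s * (Real.exp (b*s))⁻¹ * b ≤ 1 := by
    have : s * b ≤ Real.exp (b*s) := by linarith [h1]
    calc s * (Real.exp (b*s))⁻¹ * b = (s * b) * (Real.exp (b*s))⁻¹ := by ring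
      _ ≤ Real.exp (b*s) * (Real.exp (b*s))⁻¹ := by
          exact mul_le_mul_of_nonneg_right this (by positivity)
      _ = 1 := mul_inv_cancel₀ (ne_of_gt h2)
  calc s * (Real.exp (b*s))⁻¹ = (s * (Real.exp (b*s))⁻¹ * b) / b := by
        field_simp
    _ ≤ 1 / b := by gcongr

lemma key_bound {A B b Q : ℝ} (hA : 0 ≤ A) (hB : 0 ≤ B) (hb : 0 < b) (hQ : 0 ≤ Q) :
    (A + B * Q) * Real.exp (-(2 * b * Q)) ≤ (A + B / b) * Real.exp (-(b * Q)) := by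
  have h1 : Real.exp (-(2*b*Q)) = Real.exp (-(b*Q)) * Real.exp (-(b*Q)) := by
    rw [← Real.exp_add]; ring_nf
  have h2 : Real.exp (-(b*Q)) ≤ 1 := Real.exp_le_one_iff.2 (by nlinarith)
  have h3 : Q * Real.exp (-(b*Q)) ≤ 1/b := mul_exp_neg_le hQ hb
  have e1 : (0:ℝ) ≤ Real.exp (-(b*Q)) := (Real.exp_pos _).le
  rw [h1]
  calc (A + B * Q) * (Real.exp (-(b*Q)) * Real.exp (-(b*Q)))
      = (A * Real.exp (-(b*Q)) + B * (Q * Real.exp (-(b*Q)))) * Real.exp (-(b*Q)) := by ring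
    _ ≤ (A * 1 + B * (1/b)) * Real.exp (-(b*Q)) := by
        exact mul_le_mul_of_nonneg_right
          (add_le_add (mul_le_mul_of_nonneg_left h2 hA) (mul_le_mul_of_nonneg_left h3 hB)) e1
    _ = (A + B/b) * Real.exp (-(b*Q)) := by ring

lemma integrable_expq {a : ℝ} (ha : 0 < a) (x : Fin d → ℝ) :
    Integrable (fun y : Fin d → ℝ => Real.exp (-(a * q x y))) := by
  have : (fun y : Fin d → ℝ => Real.exp (-(a * q x y)))
      = fun y => ∏ k, Real.exp (-(a * (x k - y k) ^ 2)) := by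
    funext y
    rw [← Real.exp_sum]
    congr 1
    rw [q, Finset.mul_sum, ← Finset.sum_neg_distrib]
  rw [this]
  apply MeasureTheory.Integrable.fintype_prod (f := fun k s => Real.exp (-(a * (x k - s) ^ 2)))
  intro k
  have h0 : Integrable (fun s : ℝ => Real.exp (-a * s ^ 2)) := integrable_exp_neg_mul_sq ha
  have := h0.comp_sub_right (x k)
  refine this.congr (Eventually.of_forall fun s => ?_)
  show Real.exp (-a * (s - x k) ^ 2) = Real.exp (-(a * (x k - s) ^ 2))
  congr 1; ring

lemma integrable_dom {F : (Fin d → ℝ) → ℝ} (hF : Continuous F) {C a : ℝ} (ha : 0 < a)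
    (x : Fin d → ℝ) (h : ∀ y, ‖F y‖ ≤ C * Real.exp (-(a * q x y))) : Integrable F :=
  (((integrable_expq ha x).const_mul C)).mono' hF.aestronglyMeasurable (ae_of_all _ h)

lemma q_update (x y : Fin d → ℝ) (k : Fin d) (h : ℝ) :
    q (Function.update x k h) y
      = (h - y k)^2 + ∑ l ∈ Finset.univ.erase k, (x l - y l)^2 := by
  have key : ∀ l, (Function.update x k h l - y l)^2
      = Function.update (fun l => (x l - y l)^2) k ((h - y k)^2) l := by
    intro l
    rcases eq_or_ne l k with rfl | hl
    · simp
    · simp [Function.update_of_ne hl]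
  rw [q]
  simp_rw [key]
  rw [Finset.sum_update_of_mem (Finset.mem_univ k)]
  rw [Finset.sdiff_singleton_eq_erase]

lemma integral_G {c : ℝ} (hc : 0 < c) (x : Fin d → ℝ) :
    ∫ y : Fin d → ℝ, G d c (q x y) = 1 := by
  have h2πc : (0:ℝ) < 2 * π * c := by positivity
  have step1 : ∀ y : Fin d → ℝ, G d c (q x y)
      = (2*π*c) ^ (-(d:ℝ)/2) * ∏ k, Real.exp (-(x k - y k)^2 / (2*c)) := by
    intro y
    rw [G, ← Real.exp_sum]
    congr 2
    rw [q, ← Finset.sum_neg_distrib, ← Finset.sum_div]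
  simp_rw [step1]
  rw [MeasureTheory.integral_const_mul _ _,
    MeasureTheory.integral_fintype_prod_volume_eq_prod (f := fun (k : Fin d) (s : ℝ) =>
      Real.exp (-(x k - s)^2 / (2*c)))]
  have one_dim : ∀ k : Fin d, (∫ s : ℝ, Real.exp (-(x k - s)^2 / (2*c))) = Real.sqrt (2*π*c) := by
    intro k
    have : (fun s : ℝ => Real.exp (-(x k - s)^2 / (2*c)))
        = fun s => (fun z : ℝ => Real.exp (-(1/(2*c)) * z^2)) (s - x k) := by
      funext s
      congr 1
      ring
    rw [this, MeasureTheory.integral_sub_right_eq_self (fun z : ℝ => Real.exp (-(1/(2*c)) * z^2)) (x k),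
      integral_gaussian]
    rw [show π / (1/(2*c)) = 2*π*c by field_simp]
  simp_rw [one_dim]
  rw [Finset.prod_const, Finset.card_univ, Fintype.card_fin]
  rw [Real.sqrt_eq_rpow, ← Real.rpow_natCast ((2*π*c) ^ ((1:ℝ)/2)) d, ← Real.rpow_mul h2πc.le,
    ← Real.rpow_add h2πc]
  rw [show -(d:ℝ)/2 + 1/2 * (d:ℝ) = 0 by ring, Real.rpow_zero]

lemma hasDerivAt_G_sq {c : ℝ} (hc : 0 < c) (w R h : ℝ) :
    HasDerivAt (fun h => G d c ((h - w)^2 + R)) (-((h - w)/c) * G d c ((h - w)^2 + R)) h := by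
  have h1 : HasDerivAt (fun h : ℝ => -(((h - w)^2 + R) / (2*c))) (-((h-w)/c)) h := by
    have h0 : HasDerivAt (fun h : ℝ => (h - w)^2 + R) (2*(h-w)) h := by
      simpa using (((hasDerivAt_id h).sub_const w).pow 2).add_const R
    have h2 := (h0.div_const (2*c)).fun_neg
    refine h2.congr_deriv ?_
    rw [mul_div_mul_left _ _ two_ne_zero]
  have h5 := (h1.exp).const_mul ((2*π*c) ^ (-(d:ℝ)/2))
  have feq : (fun h : ℝ => G d c ((h - w)^2 + R))
      = fun h : ℝ => (2*π*c) ^ (-(d:ℝ)/2) * Real.exp (-(((h - w)^2 + R) / (2*c))) := by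
    funext z; rw [G]; congr 2; ring
  rw [feq]
  refine h5.congr_deriv ?_
  rw [G]
  rw [show -((h - w)^2 + R) / (2*c) = -(((h - w)^2 + R) / (2*c)) from by ring]
  ring

lemma hasDerivAt_G_sq' {c : ℝ} (hc : 0 < c) (w R h : ℝ) :
    HasDerivAt (fun h => -((h - w)/c) * G d c ((h - w)^2 + R))
      (((h - w)^2/c^2 - 1/c) * G d c ((h - w)^2 + R)) h := by
  have h1 : HasDerivAt (fun h : ℝ => -((h - w)/c)) (-(1/c)) h := by
    simpa using (((hasDerivAt_id h).sub_const w).div_const c).fun_neg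
  have h2 := h1.fun_mul (hasDerivAt_G_sq (d := d) hc w R h)
  refine h2.congr_deriv ?_
  ring

lemma hasDerivAt_G_c {c : ℝ} (hc : 0 < c) (r : ℝ) :
    HasDerivAt (fun c => G d c r) ((r/(2*c^2) - d/(2*c)) * G d c r) c := by
  have h2πc : (0:ℝ) < 2 * π * c := by positivity
  have h1 : HasDerivAt (fun c : ℝ => (2*π*c) ^ (-(d:ℝ)/2))
      ((-(d:ℝ)/2) * (2*π*c) ^ (-(d:ℝ)/2 - 1) * (2*π)) c := by
    have inner : HasDerivAt (fun c : ℝ => 2*π*c) (2*π) c := by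
      simpa using (hasDerivAt_id c).const_mul (2*π)
    exact (Real.hasDerivAt_rpow_const (p := -(d:ℝ)/2) (Or.inl (ne_of_gt h2πc))).comp c inner
  have h2 : HasDerivAt (fun c : ℝ => Real.exp (-r/(2*c))) (Real.exp (-r/(2*c)) * (r/(2*c^2))) c := by
    have hinv : HasDerivAt (fun c : ℝ => (-r/2) * c⁻¹) ((-r/2) * (-(c^2)⁻¹)) c :=
      (hasDerivAt_inv (ne_of_gt hc)).const_mul (-r/2)
    have inner : HasDerivAt (fun c : ℝ => -r/(2*c)) (r/(2*c^2)) c := by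
      have feq : (fun c : ℝ => -r/(2*c)) = fun c : ℝ => (-r/2) * c⁻¹ := by
        funext z
        rw [div_mul_eq_div_div, div_eq_mul_inv (-r/2)]
      rw [feq]
      convert hinv using 1
      field_simp
    exact inner.exp
  have h4 := h1.fun_mul h2
  have key : (-(d:ℝ)/2) * (2*π*c) ^ (-(d:ℝ)/2 - 1) * (2*π)
      = (-(d:ℝ)/(2*c)) * (2*π*c) ^ (-(d:ℝ)/2) := by
    rw [Real.rpow_sub h2πc, Real.rpow_one]
    field_simp
  rw [show (fun c : ℝ => G d c r)
    = fun c : ℝ => (2*π*c) ^ (-(d:ℝ)/2) * Real.exp (-r/(2*c)) from rfl]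
  refine h4.congr_deriv ?_
  rw [key, G]
  ring

lemma neg_exp_arg (a r : ℝ) : -r / (2*a) = -(1/(2*a) * r) := by ring

lemma stepA {f : (Fin d → ℝ) → ℝ} {M : ℝ} (hf : ∀ y, |f y| ≤ M) (hcf : Continuous f)
    (x : Fin d → ℝ) {c₀ : ℝ} (hc₀ : 0 < c₀) :
    Integrable (fun y => f y * ((q x y/(2*c₀^2) - d/(2*c₀)) * G d c₀ (q x y))) ∧
    HasDerivAt (fun c => ∫ y, f y * G d c (q x y))
      (∫ y, f y * ((q x y/(2*c₀^2) - d/(2*c₀)) * G d c₀ (q x y))) c₀ := by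
  have hM : 0 ≤ M := le_trans (abs_nonneg _) (hf fun _ => 0)
  have hd0 : (0:ℝ) ≤ (d:ℝ) := Nat.cast_nonneg d
  set b : ℝ := 1/(6*c₀) with hb
  have hbpos : 0 < b := by positivity
  set Bc : ℝ := M * (π*c₀) ^ (-(d:ℝ)/2) * ((d:ℝ)/c₀ + (2/c₀^2)/b) with hBc
  refine hasDerivAt_integral_of_dominated_loc_of_deriv_le (μ := volume)
    (F := fun c y => f y * G d c (q x y))
    (F' := fun c y => f y * ((q x y/(2*c^2) - d/(2*c)) * G d c (q x y)))
    (bound := fun y => Bc * Real.exp (-(b * q x y)))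
    (Metric.ball_mem_nhds _ (half_pos hc₀)) ?_ ?_ ?_ ?_ ?_ ?_
  · exact Eventually.of_forall fun c =>
      (hcf.mul ((continuous_G c).comp (continuous_q x))).aestronglyMeasurable
  · have hcont : Continuous fun y : Fin d → ℝ => f y * G d c₀ (q x y) :=
      hcf.mul ((continuous_G c₀).comp (continuous_q x))
    apply integrable_dom (C := M * (2*π*c₀) ^ (-(d:ℝ)/2)) (a := 1/(2*c₀)) hcont (by positivity) x
    intro y
    rw [Real.norm_eq_abs, abs_mul, mul_assoc]
    refine mul_le_mul (hf y) ?_ (abs_nonneg _) hM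
    rw [abs_of_nonneg (G_nonneg hc₀ _), G, ← neg_exp_arg]
  · apply Continuous.aestronglyMeasurable
    exact hcf.mul ((((continuous_q x).div_const _).sub continuous_const).mul
      ((continuous_G c₀).comp (continuous_q x)))
  · apply ae_of_all
    intro y c hcball
    rw [Metric.mem_ball, Real.dist_eq, abs_lt] at hcball
    have hc1 : c₀/2 < c := by linarith [hcball.1]
    have hc2 : c < 3*c₀/2 := by linarith [hcball.2]
    have hc : 0 < c := by linarith
    set Q := q x y with hQdef
    have hQ : 0 ≤ Q := q_nonneg x y
    have eG : G d c Q ≤ (π*c₀) ^ (-(d:ℝ)/2) * Real.exp (-(2*b*Q)) := by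
      rw [G]
      apply mul_le_mul
      · apply Real.rpow_le_rpow_of_nonpos (by positivity) (by nlinarith [pi_pos])
        linarith [hd0]
      · apply Real.exp_le_exp.2
        rw [neg_div]
        have h' : 2*b*Q = Q/(3*c₀) := by rw [hb]; ring
        have h2' : Q/(3*c₀) ≤ Q/(2*c) := by
          rw [div_le_div_iff₀ (by positivity) (by positivity)]
          nlinarith
        linarith
      · positivity
      · positivity
    have ecoeff : |Q/(2*c^2) - (d:ℝ)/(2*c)| ≤ (d:ℝ)/c₀ + (2/c₀^2) * Q := by
      have t1 : |Q/(2*c^2) - (d:ℝ)/(2*c)| ≤ Q/(2*c^2) + (d:ℝ)/(2*c) := by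
        rw [sub_eq_add_neg]
        refine (abs_add_le _ _).trans ?_
        rw [abs_neg, abs_of_nonneg (by positivity), abs_of_nonneg (by positivity)]
      refine t1.trans ?_
      have t2 : Q/(2*c^2) ≤ (2/c₀^2) * Q := by
        have key : Q * c₀^2 ≤ 4*(Q*c^2) := by
          have h1 : c₀^2 ≤ 4*c^2 := by nlinarith
          nlinarith [mul_le_mul_of_nonneg_left h1 hQ]
        calc Q/(2*c^2) ≤ (2*Q)/c₀^2 := by
              rw [div_le_div_iff₀ (by positivity) (by positivity)]
              nlinarith
          _ = (2/c₀^2) * Q := by ring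
      have t3 : (d:ℝ)/(2*c) ≤ (d:ℝ)/c₀ := by
        rw [div_le_div_iff₀ (by positivity) hc₀]
        nlinarith
      linarith
    calc ‖f y * ((Q/(2*c^2) - (d:ℝ)/(2*c)) * G d c Q)‖
        = |f y| * (|Q/(2*c^2) - (d:ℝ)/(2*c)| * G d c Q) := by
          rw [Real.norm_eq_abs, abs_mul, abs_mul, abs_of_nonneg (G_nonneg hc _)]
      _ ≤ M * ((((d:ℝ)/c₀ + (2/c₀^2) * Q)) * ((π*c₀) ^ (-(d:ℝ)/2) * Real.exp (-(2*b*Q)))) := by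
          refine mul_le_mul (hf y) ?_ (mul_nonneg (abs_nonneg _) (G_nonneg hc _)) hM
          exact mul_le_mul ecoeff eG (G_nonneg hc _) (by positivity)
      _ = (M * (π*c₀) ^ (-(d:ℝ)/2)) * (((d:ℝ)/c₀ + (2/c₀^2) * Q) * Real.exp (-(2*b*Q))) := by
          ring
      _ ≤ (M * (π*c₀) ^ (-(d:ℝ)/2)) * (((d:ℝ)/c₀ + (2/c₀^2)/b) * Real.exp (-(b*Q))) := by
          refine mul_le_mul_of_nonneg_left ?_ (by positivity)
          exact key_bound (by positivity) (by positivity) hbpos hQ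
      _ = Bc * Real.exp (-(b * Q)) := by rw [hBc]; ring
  · exact ((integrable_expq hbpos x).const_mul Bc)
  · apply ae_of_all
    intro y c hcball
    rw [Metric.mem_ball, Real.dist_eq, abs_lt] at hcball
    have hc : 0 < c := by linarith [hcball.1]
    exact (hasDerivAt_G_c (d := d) hc (q x y)).const_mul (f y)

lemma abs_le_two_add {t s Q' : ℝ} (hts : (t - s)^2 ≤ 1) (hsQ : s^2 ≤ Q') :
    |t| ≤ 2 + Q' := by
  have h1 : |t| ≤ |s| + |t - s| := by
    calc |t| = |s + (t - s)| := by ring_nf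
      _ ≤ |s| + |t - s| := abs_add_le _ _
  have h2 : |t - s| ≤ 1 := by
    rw [← Real.sqrt_one]
    rw [show |t - s| = Real.sqrt ((t-s)^2) from (Real.sqrt_sq_eq_abs _).symm]
    exact Real.sqrt_le_sqrt hts
  have h3 : |s| ≤ 1 + s^2 := by nlinarith [sq_abs s, sq_nonneg (|s| - 1)]
  linarith

lemma stepB {f : (Fin d → ℝ) → ℝ} {M : ℝ} (hf : ∀ y, |f y| ≤ M) (hcf : Continuous f)
    (x : Fin d → ℝ) (k : Fin d) {c : ℝ} (hc : 0 < c) (h₀ : ℝ) :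
    Integrable (fun y : Fin d → ℝ => f y * (-((h₀ - y k)/c) *
        G d c ((h₀ - y k)^2 + ∑ l ∈ Finset.univ.erase k, (x l - y l)^2))) ∧
    HasDerivAt (fun h => ∫ y : Fin d → ℝ,
        f y * G d c ((h - y k)^2 + ∑ l ∈ Finset.univ.erase k, (x l - y l)^2))
      (∫ y : Fin d → ℝ, f y * (-((h₀ - y k)/c) *
        G d c ((h₀ - y k)^2 + ∑ l ∈ Finset.univ.erase k, (x l - y l)^2))) h₀ := by
  have hM : 0 ≤ M := le_trans (abs_nonneg _) (hf fun _ => 0)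
  set R : (Fin d → ℝ) → ℝ := fun y => ∑ l ∈ Finset.univ.erase k, (x l - y l)^2 with hR
  have hRcont : Continuous R :=
    continuous_finset_sum _ fun l _ => (continuous_const.sub (continuous_apply l)).pow 2
  have hRnn : ∀ y, 0 ≤ R y := fun y => Finset.sum_nonneg fun _ _ => sq_nonneg _
  have contArg : ∀ h : ℝ, Continuous fun y : Fin d → ℝ => (h - y k)^2 + R y := fun h =>
    (((continuous_const.sub (continuous_apply k)).pow 2).add hRcont)
  have hqu : ∀ y h, (h - y k)^2 + R y = q (Function.update x k h) y :=
    fun y h => (q_update x y k h).symm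
  set b : ℝ := 1/(8*c) with hb
  have hbpos : 0 < b := by positivity
  set Bc : ℝ := M * (2*π*c) ^ (-(d:ℝ)/2) * Real.exp (1/(2*c)) / c * (2 + 1/b) with hBc
  refine hasDerivAt_integral_of_dominated_loc_of_deriv_le (μ := volume) (s := Metric.ball h₀ 1)
    (F := fun h y => f y * G d c ((h - y k)^2 + R y))
    (F' := fun h y => f y * (-((h - y k)/c) * G d c ((h - y k)^2 + R y)))
    (bound := fun y => Bc * Real.exp (-(b * ((h₀ - y k)^2 + R y))))
    (Metric.ball_mem_nhds _ one_pos) ?_ ?_ ?_ ?_ ?_ ?_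
  · exact Eventually.of_forall fun h =>
      (hcf.mul ((continuous_G c).comp (contArg h))).aestronglyMeasurable
  · have hcont : Continuous fun y : Fin d → ℝ => f y * G d c ((h₀ - y k)^2 + R y) :=
      hcf.mul ((continuous_G c).comp (contArg h₀))
    apply integrable_dom (C := M * (2*π*c) ^ (-(d:ℝ)/2)) (a := 1/(2*c)) hcont (by positivity)
      (Function.update x k h₀)
    intro y
    rw [Real.norm_eq_abs, abs_mul, mul_assoc]
    refine mul_le_mul (hf y) ?_ (abs_nonneg _) hM
    rw [abs_of_nonneg (G_nonneg hc _), ← hqu y h₀, G, ← neg_exp_arg]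
  · apply Continuous.aestronglyMeasurable
    exact hcf.mul ((((continuous_const.sub (continuous_apply k)).div_const c).neg).mul
      ((continuous_G c).comp (contArg h₀)))
  · apply ae_of_all
    intro y h hball
    rw [Metric.mem_ball, Real.dist_eq] at hball
    set t : ℝ := h - y k with ht
    set s : ℝ := h₀ - y k with hs
    have hts : (t - s)^2 ≤ 1 := by
      have : |t - s| = |h - h₀| := by rw [ht, hs]; ring_nf
      nlinarith [sq_abs (t - s), this ▸ hball, abs_nonneg (t - s)]
    set Q' : ℝ := s^2 + R y with hQ'
    have hsQ : s^2 ≤ Q' := by rw [hQ']; linarith [hRnn y]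
    have hQ'nn : 0 ≤ Q' := by positivity
    have habs : |t| ≤ 2 + Q' := abs_le_two_add hts hsQ
    have eExp : Real.exp (-((t^2 + R y) / (2*c)))
        ≤ Real.exp (1/(2*c)) * Real.exp (-(2*b*Q')) := by
      rw [← Real.exp_add]
      apply Real.exp_le_exp.2
      have h1 : s^2 ≤ 2*t^2 + 2 := by nlinarith [hts, sq_nonneg (t + (t - s))]
      have expand : 1/(2*c) + -(2*b*Q') - (-((t^2 + R y)/(2*c)))
          = (2 + 2*(t^2 + R y) - (s^2 + R y))/(4*c) := by
        rw [hb, hQ']; field_simp; ring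
      have num : (0:ℝ) ≤ 2 + 2*(t^2 + R y) - (s^2 + R y) := by nlinarith [hRnn y]
      have hfrac := div_nonneg num (by positivity : (0:ℝ) ≤ 4*c)
      linarith [expand, hfrac]
    calc ‖f y * (-(t/c) * G d c (t^2 + R y))‖
        = |f y| * ((|t|/c) * G d c (t^2 + R y)) := by
          rw [Real.norm_eq_abs, abs_mul, abs_mul, abs_neg, abs_div,
            abs_of_pos hc, abs_of_nonneg (G_nonneg hc _)]
      _ ≤ M * (((2 + Q')/c) * ((2*π*c) ^ (-(d:ℝ)/2) * (Real.exp (1/(2*c)) * Real.exp (-(2*b*Q'))))) := by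
          refine mul_le_mul (hf y) ?_ (mul_nonneg (div_nonneg (abs_nonneg _) hc.le) (G_nonneg hc _)) hM
          refine mul_le_mul (by gcongr) ?_ (G_nonneg hc _) (by positivity)
          rw [G, neg_div (2*c) (t^2 + R y)]
          exact mul_le_mul_of_nonneg_left eExp (by positivity)
      _ = (M * (2*π*c) ^ (-(d:ℝ)/2) * Real.exp (1/(2*c)) / c) * ((2 + 1*Q') * Real.exp (-(2*b*Q'))) := by
          ring
      _ ≤ (M * (2*π*c) ^ (-(d:ℝ)/2) * Real.exp (1/(2*c)) / c) * ((2 + 1/b) * Real.exp (-(b*Q'))) := by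
          refine mul_le_mul_of_nonneg_left ?_ (by positivity)
          exact key_bound (by norm_num) (by norm_num) hbpos hQ'nn
      _ = Bc * Real.exp (-(b * ((h₀ - y k)^2 + R y))) := by rw [hBc, hQ', hs]; ring_nf
  · have : (fun y : Fin d → ℝ => Bc * Real.exp (-(b * ((h₀ - y k)^2 + R y))))
        = fun y => Bc * Real.exp (-(b * q (Function.update x k h₀) y)) := by
      funext y; rw [hqu]
    rw [this]
    exact (integrable_expq hbpos _).const_mul Bc
  · apply ae_of_all
    intro y h _
    exact (hasDerivAt_G_sq (d := d) hc (y k) (R y) h).const_mul (f y)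

lemma stepC {f : (Fin d → ℝ) → ℝ} {M : ℝ} (hf : ∀ y, |f y| ≤ M) (hcf : Continuous f)
    (x : Fin d → ℝ) (k : Fin d) {c : ℝ} (hc : 0 < c) (h₀ : ℝ) :
    Integrable (fun y : Fin d → ℝ => f y * (((h₀ - y k)^2/c^2 - 1/c) *
        G d c ((h₀ - y k)^2 + ∑ l ∈ Finset.univ.erase k, (x l - y l)^2))) ∧
    HasDerivAt (fun h => ∫ y : Fin d → ℝ,
        f y * (-((h - y k)/c) * G d c ((h - y k)^2 + ∑ l ∈ Finset.univ.erase k, (x l - y l)^2)))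
      (∫ y : Fin d → ℝ, f y * (((h₀ - y k)^2/c^2 - 1/c) *
        G d c ((h₀ - y k)^2 + ∑ l ∈ Finset.univ.erase k, (x l - y l)^2))) h₀ := by
  have hM : 0 ≤ M := le_trans (abs_nonneg _) (hf fun _ => 0)
  set R : (Fin d → ℝ) → ℝ := fun y => ∑ l ∈ Finset.univ.erase k, (x l - y l)^2 with hR
  have hRcont : Continuous R :=
    continuous_finset_sum _ fun l _ => (continuous_const.sub (continuous_apply l)).pow 2
  have hRnn : ∀ y, 0 ≤ R y := fun y => Finset.sum_nonneg fun _ _ => sq_nonneg _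
  have contArg : ∀ h : ℝ, Continuous fun y : Fin d → ℝ => (h - y k)^2 + R y := fun h =>
    (((continuous_const.sub (continuous_apply k)).pow 2).add hRcont)
  have hqu : ∀ y h, (h - y k)^2 + R y = q (Function.update x k h) y :=
    fun y h => (q_update x y k h).symm
  set b : ℝ := 1/(8*c) with hb
  have hbpos : 0 < b := by positivity
  set Bc : ℝ := M * (2*π*c) ^ (-(d:ℝ)/2) * Real.exp (1/(2*c)) * ((2/c^2 + 1/c) + (2/c^2)/b)
    with hBc
  refine hasDerivAt_integral_of_dominated_loc_of_deriv_le (μ := volume) (s := Metric.ball h₀ 1)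
    (F := fun h y => f y * (-((h - y k)/c) * G d c ((h - y k)^2 + R y)))
    (F' := fun h y => f y * (((h - y k)^2/c^2 - 1/c) * G d c ((h - y k)^2 + R y)))
    (bound := fun y => Bc * Real.exp (-(b * ((h₀ - y k)^2 + R y))))
    (Metric.ball_mem_nhds _ one_pos) ?_ ?_ ?_ ?_ ?_ ?_
  · refine Eventually.of_forall fun h => Continuous.aestronglyMeasurable ?_
    exact hcf.mul ((((continuous_const.sub (continuous_apply k)).div_const c).neg).mul
      ((continuous_G c).comp (contArg h)))
  · exact (stepB hf hcf x k hc h₀).1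
  · apply Continuous.aestronglyMeasurable
    exact hcf.mul (((((continuous_const.sub (continuous_apply k)).pow 2).div_const _).sub
      continuous_const).mul ((continuous_G c).comp (contArg h₀)))
  · apply ae_of_all
    intro y h hball
    rw [Metric.mem_ball, Real.dist_eq] at hball
    set t : ℝ := h - y k with ht
    set s : ℝ := h₀ - y k with hs
    have hts : (t - s)^2 ≤ 1 := by
      have : |t - s| = |h - h₀| := by rw [ht, hs]; ring_nf
      nlinarith [sq_abs (t - s), this ▸ hball, abs_nonneg (t - s)]
    set Q' : ℝ := s^2 + R y with hQ'
    have hsQ : s^2 ≤ Q' := by rw [hQ']; linarith [hRnn y]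
    have hQ'nn : 0 ≤ Q' := by positivity
    have eExp : Real.exp (-((t^2 + R y) / (2*c)))
        ≤ Real.exp (1/(2*c)) * Real.exp (-(2*b*Q')) := by
      rw [← Real.exp_add]
      apply Real.exp_le_exp.2
      have expand : 1/(2*c) + -(2*b*Q') - (-((t^2 + R y)/(2*c)))
          = (2 + 2*(t^2 + R y) - (s^2 + R y))/(4*c) := by
        rw [hb, hQ']; field_simp; ring
      have num : (0:ℝ) ≤ 2 + 2*(t^2 + R y) - (s^2 + R y) := by
        nlinarith [hRnn y, hts, sq_nonneg (t + (t - s))]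
      have hfrac := div_nonneg num (by positivity : (0:ℝ) ≤ 4*c)
      linarith [expand, hfrac]
    have hcoeff : |t^2/c^2 - 1/c| ≤ (2/c^2 + 1/c) + (2/c^2)*Q' := by
      have ht2 : t^2 ≤ 2*Q' + 2 := by
        nlinarith [hts, hsQ, sq_nonneg (s - (t - s))]
      have h4 : |t^2/c^2 - 1/c| ≤ t^2/c^2 + 1/c := by
        rw [sub_eq_add_neg]
        refine (abs_add_le _ _).trans ?_
        rw [abs_neg, abs_of_nonneg (by positivity : (0:ℝ) ≤ t^2/c^2),
          abs_of_nonneg (by positivity : (0:ℝ) ≤ 1/c)]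
      refine h4.trans ?_
      have h5 : t^2/c^2 ≤ (2*Q'+2)/c^2 := by gcongr
      have h6 : (2*Q'+2)/c^2 = 2/c^2 + (2/c^2)*Q' := by ring
      linarith
    calc ‖f y * ((t^2/c^2 - 1/c) * G d c (t^2 + R y))‖
        = |f y| * (|t^2/c^2 - 1/c| * G d c (t^2 + R y)) := by
          rw [Real.norm_eq_abs, abs_mul, abs_mul, abs_of_nonneg (G_nonneg hc _)]
      _ ≤ M * ((((2/c^2 + 1/c) + (2/c^2)*Q')) *
            ((2*π*c) ^ (-(d:ℝ)/2) * (Real.exp (1/(2*c)) * Real.exp (-(2*b*Q'))))) := by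
          refine mul_le_mul (hf y) ?_ (mul_nonneg (abs_nonneg _) (G_nonneg hc _)) hM
          refine mul_le_mul hcoeff ?_ (G_nonneg hc _) (by positivity)
          rw [G, neg_div (2*c) (t^2 + R y)]
          exact mul_le_mul_of_nonneg_left eExp (by positivity)
      _ = (M * (2*π*c) ^ (-(d:ℝ)/2) * Real.exp (1/(2*c))) *
            (((2/c^2 + 1/c) + (2/c^2)*Q') * Real.exp (-(2*b*Q'))) := by ring
      _ ≤ (M * (2*π*c) ^ (-(d:ℝ)/2) * Real.exp (1/(2*c))) *
            (((2/c^2 + 1/c) + (2/c^2)/b) * Real.exp (-(b*Q'))) := by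
          refine mul_le_mul_of_nonneg_left ?_ (by positivity)
          exact key_bound (by positivity) (by positivity) hbpos hQ'nn
      _ = Bc * Real.exp (-(b * ((h₀ - y k)^2 + R y))) := by rw [hBc, hQ', hs]; ring_nf
  · have heq : (fun y : Fin d → ℝ => Bc * Real.exp (-(b * ((h₀ - y k)^2 + R y))))
        = fun y => Bc * Real.exp (-(b * q (Function.update x k h₀) y)) := by
      funext y; rw [hqu]
    rw [heq]
    exact (integrable_expq hbpos _).const_mul Bc
  · apply ae_of_all
    intro y h _
    exact (hasDerivAt_G_sq' (d := d) hc (y k) (R y) h).const_mul (f y)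

lemma integrable_fG {f : (Fin d → ℝ) → ℝ} {M : ℝ} (hf : ∀ y, |f y| ≤ M) (hcf : Continuous f)
    (x : Fin d → ℝ) {c : ℝ} (hc : 0 < c) :
    Integrable (fun y : Fin d → ℝ => f y * G d c (q x y)) := by
  have hM : 0 ≤ M := le_trans (abs_nonneg _) (hf fun _ => 0)
  have hcont : Continuous fun y : Fin d → ℝ => f y * G d c (q x y) :=
    hcf.mul ((continuous_G c).comp (continuous_q x))
  apply integrable_dom (C := M * (2*π*c) ^ (-(d:ℝ)/2)) (a := 1/(2*c)) hcont (by positivity) x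
  intro y
  rw [Real.norm_eq_abs, abs_mul, mul_assoc]
  refine mul_le_mul (hf y) ?_ (abs_nonneg _) hM
  rw [abs_of_nonneg (G_nonneg hc _), G, ← neg_exp_arg]

lemma second_partial {f : (Fin d → ℝ) → ℝ} {M : ℝ} (hf : ∀ y, |f y| ≤ M) (hcf : Continuous f)
    (x : Fin d → ℝ) (k : Fin d) {c : ℝ} (hc : 0 < c) :
    pd k (pd k (fun x' : Fin d → ℝ => ∫ y : Fin d → ℝ, f y * G d c (q x' y))) x
      = ∫ y : Fin d → ℝ, f y * (((x k - y k)^2/c^2 - 1/c) * G d c (q x y)) := by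
  have back : ∀ y : Fin d → ℝ,
      (x k - y k)^2 + ∑ l ∈ Finset.univ.erase k, (x l - y l)^2 = q x y := by
    intro y
    rw [← q_update x y k (x k), Function.update_eq_self]
  have inner : ∀ h : ℝ,
      pd k (fun x' : Fin d → ℝ => ∫ y : Fin d → ℝ, f y * G d c (q x' y)) (Function.update x k h)
      = ∫ y : Fin d → ℝ, f y * (-((h - y k)/c) *
          G d c ((h - y k)^2 + ∑ l ∈ Finset.univ.erase k, (x l - y l)^2)) := by
    intro h
    show deriv (fun h' : ℝ => ∫ y : Fin d → ℝ,
        f y * G d c (q (Function.update (Function.update x k h) k h') y))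
        (Function.update x k h k) = _
    have e1 : (fun h' : ℝ => ∫ y : Fin d → ℝ,
        f y * G d c (q (Function.update (Function.update x k h) k h') y))
        = fun h' : ℝ => ∫ y : Fin d → ℝ,
            f y * G d c ((h' - y k)^2 + ∑ l ∈ Finset.univ.erase k, (x l - y l)^2) := by
      funext h'
      rw [Function.update_idem]
      simp_rw [q_update]
    rw [e1, Function.update_self]
    exact ((stepB hf hcf x k hc h).2).deriv
  show deriv (fun h : ℝ =>
      pd k (fun x' : Fin d → ℝ => ∫ y : Fin d → ℝ, f y * G d c (q x' y))
        (Function.update x k h)) (x k) = _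
  rw [funext inner]
  have := ((stepC hf hcf x k hc (x k)).2).deriv
  rw [this]
  simp_rw [back]

lemma lap_eq {f : (Fin d → ℝ) → ℝ} {M : ℝ} (hf : ∀ y, |f y| ≤ M) (hcf : Continuous f)
    (x : Fin d → ℝ) {c : ℝ} (hc : 0 < c) :
    lap (fun x' : Fin d → ℝ => ∫ y : Fin d → ℝ, f y * G d c (q x' y)) x
      = ∫ y : Fin d → ℝ, f y * ((q x y/c^2 - d/c) * G d c (q x y)) := by
  have back : ∀ (k : Fin d) (y : Fin d → ℝ),
      (x k - y k)^2 + ∑ l ∈ Finset.univ.erase k, (x l - y l)^2 = q x y := by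
    intro k y
    rw [← q_update x y k (x k), Function.update_eq_self]
  have hint : ∀ k : Fin d, Integrable (fun y : Fin d → ℝ =>
      f y * (((x k - y k)^2/c^2 - 1/c) * G d c (q x y))) := by
    intro k
    have := (stepC hf hcf x k hc (x k)).1
    refine this.congr (Eventually.of_forall fun y => ?_)
    simp only [back]
  rw [lap]
  rw [Finset.sum_congr rfl (fun k _ => second_partial hf hcf x k hc)]
  rw [← MeasureTheory.integral_finset_sum _ (fun k _ => hint k)]
  congr 1
  funext y
  have hsum : ∑ k : Fin d, ((x k - y k)^2/c^2 - 1/c) = q x y/c^2 - d/c := by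
    rw [Finset.sum_sub_distrib, ← Finset.sum_div]
    congr 1
    rw [Finset.sum_const, Finset.card_univ, Fintype.card_fin, nsmul_eq_mul]
    ring
  calc ∑ k : Fin d, f y * (((x k - y k)^2/c^2 - 1/c) * G d c (q x y))
      = (∑ k : Fin d, ((x k - y k)^2/c^2 - 1/c)) * (f y * G d c (q x y)) := by
        rw [Finset.sum_mul]
        exact Finset.sum_congr rfl fun k _ => by ring
    _ = f y * ((q x y/c^2 - d/c) * G d c (q x y)) := by rw [hsum]; ring

lemma heat {f : (Fin d → ℝ) → ℝ} {M : ℝ} (hf : ∀ y, |f y| ≤ M) (hcf : Continuous f)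
    (x : Fin d → ℝ) {c₀ : ℝ} (hc₀ : 0 < c₀) :
    HasDerivAt (fun c => ∫ y : Fin d → ℝ, f y * G d c (q x y))
      ((1/2) * lap (fun x' : Fin d → ℝ => ∫ y : Fin d → ℝ, f y * G d c₀ (q x' y)) x) c₀ := by
  have hA := (stepA hf hcf x hc₀).2
  convert hA using 1
  rw [lap_eq hf hcf x hc₀, ← MeasureTheory.integral_const_mul]
  congr 1
  funext y
  ring

end BSaux

/-- `u(t,x) = ∫ f(y) K^{BS}(t;x,y) dy` is bounded and solves the
heat-type system `∂u/∂t_j = (1/2)(∏_{i≠j} t_i) Δ_x u`. -/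
theorem brownian_sheet_heat_system
    (n d : ℕ) (hn : 1 ≤ n) (hd : 1 ≤ d)
    (f : (Fin d → ℝ) → ℝ) (hb : ∃ M, ∀ y, |f y| ≤ M) (hc : Continuous f)
    (u : (Fin n → ℝ) → (Fin d → ℝ) → ℝ)
    (hu : ∀ t x, u t x = ∫ y : Fin d → ℝ, f y * Kbs n d t x y) :
    (∃ M, ∀ (t : Fin n → ℝ) (x : Fin d → ℝ), (∀ i, 0 < t i) → |u t x| ≤ M) ∧
    ∀ (j : Fin n) (t : Fin n → ℝ), (∀ i, 0 < t i) → ∀ x : Fin d → ℝ,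
      pd j (fun t' => u t' x) t
        = (1 / 2) * (∏ i ∈ Finset.univ.erase j, t i) * lap (u t) x := by
  obtain ⟨M, hM⟩ := hb
  have hM0 : 0 ≤ M := le_trans (abs_nonneg _) (hM fun _ => 0)
  have hKbs : ∀ (t : Fin n → ℝ) (x y : Fin d → ℝ),
      Kbs n d t x y = BSaux.G d (∏ i, t i) (BSaux.q x y) := fun t x y => rfl
  constructor
  · refine ⟨M, fun t x ht => ?_⟩
    have hcpos : 0 < ∏ i, t i := Finset.prod_pos fun i _ => ht i
    rw [hu]
    simp_rw [hKbs t x]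
    have hint := BSaux.integrable_fG hM hc x hcpos
    calc |∫ y : Fin d → ℝ, f y * BSaux.G d (∏ i, t i) (BSaux.q x y)|
        ≤ ∫ y : Fin d → ℝ, |f y * BSaux.G d (∏ i, t i) (BSaux.q x y)| := by
          simpa only [Real.norm_eq_abs] using MeasureTheory.norm_integral_le_integral_norm
            (μ := volume) (fun y : Fin d → ℝ => f y * BSaux.G d (∏ i, t i) (BSaux.q x y))
      _ ≤ ∫ y : Fin d → ℝ, M * BSaux.G d (∏ i, t i) (BSaux.q x y) := by
          refine MeasureTheory.integral_mono hint.abs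
            ((BSaux.integrable_fG (f := fun _ => (1:ℝ)) (M := 1)
              (fun _ => by norm_num) continuous_const x hcpos).const_mul M |>.congr
              (Eventually.of_forall fun y => by simp)) fun y => ?_
          rw [abs_mul, abs_of_nonneg (BSaux.G_nonneg hcpos _)]
          exact mul_le_mul_of_nonneg_right (hM y) (BSaux.G_nonneg hcpos _)
      _ = M * ∫ y : Fin d → ℝ, BSaux.G d (∏ i, t i) (BSaux.q x y) :=
          MeasureTheory.integral_const_mul M _
      _ = M := by rw [BSaux.integral_G hcpos x, mul_one]
  · intro j t ht x
    set P : ℝ := ∏ i ∈ Finset.univ.erase j, t i with hP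
    have hPpos : 0 < P := Finset.prod_pos fun i _ => ht (i)
    have htj : 0 < t j := ht j
    have hc₀ : 0 < t j * P := mul_pos htj hPpos
    have hfun : (fun h : ℝ => u (Function.update t j h) x)
        = fun h : ℝ => ∫ y : Fin d → ℝ, f y * BSaux.G d (h * P) (BSaux.q x y) := by
      funext h
      rw [hu]
      have hprod : (∏ i, Function.update t j h i) = h * P := by
        rw [Finset.prod_update_of_mem (Finset.mem_univ j), Finset.sdiff_singleton_eq_erase]
      simp_rw [hKbs (Function.update t j h) x, hprod]
    have houter := BSaux.heat hM hc x (c₀ := t j * P) hc₀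
    have hinner : HasDerivAt (fun h : ℝ => h * P) P (t j) := hasDerivAt_mul_const P
    have hcomp := HasDerivAt.comp (t j) houter hinner
    have hpd : pd j (fun t' => u t' x) t
        = (1/2) * lap (fun x' : Fin d → ℝ =>
            ∫ y : Fin d → ℝ, f y * BSaux.G d (t j * P) (BSaux.q x' y)) x * P := by
      show deriv (fun h : ℝ => u (Function.update t j h) x) (t j) = _
      rw [hfun]
      exact HasDerivAt.deriv hcomp
    have hut : u t = fun x' : Fin d → ℝ =>
        ∫ y : Fin d → ℝ, f y * BSaux.G d (t j * P) (BSaux.q x' y) := by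
      funext x'
      rw [hu]
      have hprod : (∏ i, t i) = t j * P := (Finset.mul_prod_erase _ _ (Finset.mem_univ j)).symm
      simp_rw [hKbs t x', hprod]
    rw [hpd, hut]
    ring
end
end

section
/- Let f : ℝ^d → ℝ be bounded and continuous, and define u(t,x) = ∫_{ℝ^d} f(y) K^{BS}(t;x,y) dy for t ∈ (0,∞)ⁿ, x ∈ ℝ^d. Then for every point t₀ ∈ ∂ℝ₊ⁿ (i.e., t₀ ∈ [0,∞)ⁿ with at least one zero coordinate) and every x₀ ∈ ℝ^d, u(s,y) → f(x₀) as (s,y) → (t₀,x₀) with s ∈ (0,∞)ⁿ and y ∈ ℝ^d; in particular u extends continuously to ∂ℝ₊ⁿ × ℝ^d with boundary value f(x). -/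
open MeasureTheory Real Filter Finset

noncomputable section

def stdGauss (d : ℕ) (z : Fin d → ℝ) : ℝ :=
  (2 * π) ^ (-(d : ℝ) / 2) * Real.exp (-(∑ k, z k ^ 2) / 2)

lemma stdGauss_nonneg (d : ℕ) (z : Fin d → ℝ) : 0 ≤ stdGauss d z := by
  unfold stdGauss; positivity

lemma continuous_stdGauss (d : ℕ) : Continuous (stdGauss d) := by
  unfold stdGauss
  exact continuous_const.mul (Real.continuous_exp.comp
    (((continuous_finset_sum _ fun k _ => (continuous_apply k).pow 2).neg).div_const 2))

lemma stdGauss_eq_prod (d : ℕ) (z : Fin d → ℝ) :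
    stdGauss d z = ∏ k : Fin d, ((2 * π) ^ (-(1:ℝ) / 2) * Real.exp (-(z k ^ 2) / 2)) := by
  rw [Finset.prod_mul_distrib, Finset.prod_const, ← Real.exp_sum]
  unfold stdGauss
  congr 1
  · rw [Finset.card_univ, Fintype.card_fin, ← Real.rpow_natCast ((2*π) ^ (-(1:ℝ)/2)) d,
      ← Real.rpow_mul (by positivity)]
    congr 1
    ring
  · congr 1
    rw [neg_div, Finset.sum_div, neg_eq_iff_eq_neg, ← Finset.sum_neg_distrib]
    exact Finset.sum_congr rfl fun k _ => by ring

lemma integrable_stdGauss (d : ℕ) : Integrable (stdGauss d) := by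
  have h1 : Integrable (fun x : ℝ => (2 * π) ^ (-(1:ℝ)/2) * Real.exp (-(x ^ 2) / 2)) := by
    have h := (integrable_exp_neg_mul_sq (show (0:ℝ) < 1/2 by norm_num)).const_mul
      ((2 * π) ^ (-(1:ℝ)/2))
    refine h.congr (ae_of_all _ fun x => ?_)
    ring_nf
  have h2 := Integrable.fintype_prod (𝕜 := ℝ)
    (f := fun _ : Fin d => fun x : ℝ => (2 * π) ^ (-(1:ℝ)/2) * Real.exp (-(x ^ 2) / 2))
    (fun _ => h1)
  exact h2.congr (ae_of_all _ fun z => (stdGauss_eq_prod d z).symm)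

lemma integral_stdGauss (d : ℕ) : ∫ z : Fin d → ℝ, stdGauss d z = 1 := by
  have h2 : ∫ x : ℝ, Real.exp (-(x ^ 2) / 2) = Real.sqrt (2 * π) := by
    have h := integral_gaussian (1/2 : ℝ)
    rw [show (π / (1/2 : ℝ)) = 2 * π by ring] at h
    simp_rw [show ∀ x : ℝ, -(x ^ 2) / 2 = -(1/2 : ℝ) * x ^ 2 from fun x => by ring]
    exact h
  have h1 : ∫ x : ℝ, (2 * π) ^ (-(1:ℝ)/2) * Real.exp (-(x ^ 2) / 2) = 1 := by
    rw [integral_const_mul, h2, Real.sqrt_eq_rpow, ← Real.rpow_add (by positivity)]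
    norm_num
  simp_rw [stdGauss_eq_prod]
  rw [show (volume : Measure (Fin d → ℝ)) = Measure.pi (fun _ => volume) from rfl,
    integral_fintype_prod_eq_prod (ι := Fin d)
    (fun _ => fun x : ℝ => (2 * π) ^ (-(1:ℝ)/2) * Real.exp (-(x ^ 2) / 2)), h1]
  simp

lemma change_var (n d : ℕ) (f : (Fin d → ℝ) → ℝ) (t : Fin n → ℝ)
    (ht : 0 < ∏ i, t i) (x : Fin d → ℝ) :
    ∫ y : Fin d → ℝ, f y * Kbs n d t x y
      = ∫ z : Fin d → ℝ, f (x + Real.sqrt (∏ i, t i) • z) * stdGauss d z := by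
  set τ := ∏ i, t i with hτ
  set c := Real.sqrt τ with hcdef
  have hc0 : 0 < c := Real.sqrt_pos.2 ht
  have hcsq : c ^ 2 = τ := Real.sq_sqrt ht.le
  have hfr : Module.finrank ℝ (Fin d → ℝ) = d := by
    simp [Module.finrank_fintype_fun_eq_card]
  set G : (Fin d → ℝ) → ℝ := fun y => f y * Kbs n d t x y with hG
  have hpt : ∀ z : Fin d → ℝ, f (x + c • z) * stdGauss d z = G (x + c • z) * c ^ d := by
    intro z
    have hsum : (∑ k, (x k - (x + c • z) k) ^ 2) = τ * ∑ k, z k ^ 2 := by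
      rw [Finset.mul_sum]
      refine Finset.sum_congr rfl fun k _ => ?_
      have : x k - (x + c • z) k = -(c * z k) := by
        simp only [Pi.add_apply, Pi.smul_apply, smul_eq_mul]; ring
      rw [this]
      nlinarith [hcsq]
    have hcn : c ^ d = τ ^ ((d:ℝ)/2) := by
      rw [← Real.rpow_natCast c d, hcdef, Real.sqrt_eq_rpow, ← Real.rpow_mul ht.le]
      congr 1; ring
    have hexp : -(τ * ∑ k, z k ^ 2) / (2 * τ) = -(∑ k, z k ^ 2) / 2 := by
      field_simp
    have hone : τ ^ (-(d:ℝ)/2) * τ ^ ((d:ℝ)/2) = 1 := by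
      rw [← Real.rpow_add ht, show -(d:ℝ)/2 + (d:ℝ)/2 = 0 by ring, Real.rpow_zero]
    rw [hG]
    show f (x + c • z) * stdGauss d z = f (x + c • z) * Kbs n d t x (x + c • z) * c ^ d
    unfold Kbs stdGauss
    rw [← hτ, hsum, hcn, hexp, Real.mul_rpow (by positivity) ht.le]
    linear_combination (-(f (x + c • z) * (2 * π) ^ (-(d:ℝ)/2) *
      Real.exp (-(∑ k, z k ^ 2) / 2))) * hone
  have h1 : ∫ z : Fin d → ℝ, G (x + c • z) = (c ^ d)⁻¹ • ∫ w : Fin d → ℝ, G (x + w) := by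
    have h := MeasureTheory.Measure.integral_comp_smul_of_nonneg (volume)
      (fun w => G (x + w)) c (hR := hc0.le)
    rw [hfr] at h
    exact h
  have h2 : ∫ w : Fin d → ℝ, G (x + w) = ∫ y, G y :=
    MeasureTheory.integral_add_left_eq_self G x
  calc ∫ y : Fin d → ℝ, f y * Kbs n d t x y = ∫ y, G y := rfl
    _ = ∫ z : Fin d → ℝ, G (x + c • z) * c ^ d := by
        rw [integral_mul_const, h1, h2, smul_eq_mul]
        field_simp
    _ = ∫ z : Fin d → ℝ, f (x + c • z) * stdGauss d z := by
        exact (integral_congr_ae (ae_of_all _ fun z => hpt z)).symm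

/-- `u(t,x) = ∫ f(y) K^{BS}(t;x,y) dy` attains the boundary value `f`
continuously at every point of `∂ℝ₊ⁿ × ℝ^d`. -/
theorem brownian_sheet_boundary_value
    (n d : ℕ) (hn : 1 ≤ n) (hd : 1 ≤ d)
    (f : (Fin d → ℝ) → ℝ) (hb : ∃ M, ∀ y, |f y| ≤ M) (hc : Continuous f)
    (u : (Fin n → ℝ) → (Fin d → ℝ) → ℝ)
    (hu : ∀ t x, u t x = ∫ y : Fin d → ℝ, f y * Kbs n d t x y)
    (t₀ : Fin n → ℝ) (ht₀ : ∀ i, 0 ≤ t₀ i) (hbdry : ∃ i, t₀ i = 0)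
    (x₀ : Fin d → ℝ) :
    Filter.Tendsto (fun p : (Fin n → ℝ) × (Fin d → ℝ) => u p.1 p.2)
      (nhdsWithin (t₀, x₀) {p : (Fin n → ℝ) × (Fin d → ℝ) | ∀ i, 0 < p.1 i})
      (nhds (f x₀)) := by
  obtain ⟨M, hM⟩ := hb
  set S : Set ((Fin n → ℝ) × (Fin d → ℝ)) := {p | ∀ i, 0 < p.1 i} with hS
  set l := nhdsWithin (t₀, x₀) S with hl
  haveI hcg : l.IsCountablyGenerated := by
    rw [hl, nhdsWithin]; infer_instance
  have hτ : Tendsto (fun p : (Fin n → ℝ) × (Fin d → ℝ) => ∏ i, p.1 i) l (nhds 0) := by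
    have hcont : Continuous fun p : (Fin n → ℝ) × (Fin d → ℝ) => ∏ i, p.1 i :=
      continuous_finset_prod _ fun i _ => (continuous_apply i).comp continuous_fst
    have h0 : (∏ i, t₀ i) = 0 := by
      obtain ⟨i, hi⟩ := hbdry
      exact Finset.prod_eq_zero (Finset.mem_univ i) hi
    have h := hcont.tendsto (t₀, x₀)
    rw [h0] at h
    exact h.mono_left nhdsWithin_le_nhds
  have hsq : Tendsto (fun p : (Fin n → ℝ) × (Fin d → ℝ) =>
      Real.sqrt (∏ i, p.1 i)) l (nhds 0) := by
    have h := (Real.continuous_sqrt.tendsto 0).comp hτ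
    simpa [Function.comp_def] using h
  have hx : Tendsto (fun p : (Fin n → ℝ) × (Fin d → ℝ) => p.2) l (nhds x₀) :=
    (continuous_snd.tendsto (t₀, x₀)).mono_left nhdsWithin_le_nhds
  have key : Tendsto (fun p : (Fin n → ℝ) × (Fin d → ℝ) =>
      ∫ z : Fin d → ℝ, f (p.2 + Real.sqrt (∏ i, p.1 i) • z) * stdGauss d z) l
      (nhds (∫ z : Fin d → ℝ, f x₀ * stdGauss d z)) := by
    apply tendsto_integral_filter_of_dominated_convergence (fun z => M * stdGauss d z)
    · refine Eventually.of_forall fun p => ?_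
      refine Continuous.aestronglyMeasurable ?_
      exact ((hc.comp (continuous_const.add
        (continuous_id.const_smul (Real.sqrt (∏ i, p.1 i))))).mul (continuous_stdGauss d))
    · refine Eventually.of_forall fun p => ae_of_all _ fun z => ?_
      rw [norm_mul, Real.norm_eq_abs, Real.norm_eq_abs,
        abs_of_nonneg (stdGauss_nonneg d z)]
      exact mul_le_mul_of_nonneg_right (hM _) (stdGauss_nonneg d z)
    · exact (integrable_stdGauss d).const_mul M
    · refine ae_of_all _ fun z => ?_
      have h1 : Tendsto (fun p : (Fin n → ℝ) × (Fin d → ℝ) =>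
          p.2 + Real.sqrt (∏ i, p.1 i) • z) l (nhds x₀) := by
        have h := hx.add (hsq.smul_const z)
        simpa using h
      exact ((hc.tendsto x₀).comp h1).mul_const _
  have hval : (∫ z : Fin d → ℝ, f x₀ * stdGauss d z) = f x₀ := by
    rw [integral_const_mul, integral_stdGauss, mul_one]
  rw [hval] at key
  apply key.congr'
  filter_upwards [self_mem_nhdsWithin] with p hp
  have hpos : 0 < ∏ i, p.1 i := Finset.prod_pos fun i _ => hp i
  rw [hu]
  exact (change_var n d f p.1 hpos p.2).symm
end
end

section
/- Let f : ℝ^d → ℝ be bounded and continuous, and define u(t,x) = ∫_{ℝ^d} f(y) K^{BS}(t;x,y) dy for t ∈ (0,∞)ⁿ, x ∈ ℝ^d. Then u is a bounded solution of the nonlinear second order PDE (∂u/∂t₁)(∂u/∂t₂)⋯(∂u/∂t_n) = ((t₁ t₂ ⋯ t_n)^{n−1} / 2ⁿ) (Δ_x u)ⁿ for every t ∈ (0,∞)ⁿ and x ∈ ℝ^d. -/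
open MeasureTheory Real Filter Finset

noncomputable section

namespace BS

def Kf (d : ℕ) (s : ℝ) (x y : Fin d → ℝ) : ℝ :=
  (2 * π * s) ^ (-(d : ℝ) / 2) * Real.exp (-(∑ k, (x k - y k) ^ 2) / (2 * s))
lemma sum_upd (d : ℕ) (x y : Fin d → ℝ) (k : Fin d) (h : ℝ) :
    ∑ j, (Function.update x k h j - y j) ^ 2
      = (∑ j ∈ univ.erase k, (x j - y j) ^ 2) + (h - y k) ^ 2 := by
  have e : (fun j => (Function.update x k h j - y j) ^ 2)
      = Function.update (fun j => (x j - y j) ^ 2) k ((h - y k) ^ 2) := by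
    funext j
    rcases eq_or_ne j k with rfl | hj
    · simp
    · simp [Function.update_of_ne hj]
  rw [e, Finset.sum_update_of_mem (mem_univ k), add_comm, Finset.sdiff_singleton_eq_erase]

lemma sum_split (d : ℕ) (x y : Fin d → ℝ) (k : Fin d) :
    ∑ j, (x j - y j) ^ 2
      = (∑ j ∈ univ.erase k, (x j - y j) ^ 2) + (x k - y k) ^ 2 :=
  (Finset.sum_erase_add univ _ (mem_univ k)).symm

lemma hasDerivAt_Kf_x (d : ℕ) (x y : Fin d → ℝ) (k : Fin d) {s : ℝ} (hs : 0 < s) :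
    HasDerivAt (fun h => Kf d s (Function.update x k h) y)
      (-((x k - y k) / s) * Kf d s x y) (x k) := by
  set A := ∑ j ∈ univ.erase k, (x j - y j) ^ 2 with hA
  have hrw : (fun h => Kf d s (Function.update x k h) y)
      = fun h => (2 * π * s) ^ (-(d : ℝ) / 2) * Real.exp (-(A + (h - y k) ^ 2) / (2 * s)) := by
    funext h; unfold Kf; rw [sum_upd, ← hA]
  rw [hrw]
  have h0 : HasDerivAt (fun h : ℝ => (h - y k) ^ 2) (2 * (x k - y k)) (x k) := by
    simpa using ((hasDerivAt_id (x k)).sub_const (y k)).fun_pow 2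
  have h1 := (((h0.const_add A).fun_neg).div_const (2 * s)).exp
  have h2 := h1.const_mul ((2 * π * s) ^ (-(d : ℝ) / 2))
  refine h2.congr_deriv ?_
  unfold Kf
  rw [sum_split d x y k, ← hA]
  field_simp

lemma hasDerivAt_Kf_xx (d : ℕ) (x y : Fin d → ℝ) (k : Fin d) {s : ℝ} (hs : 0 < s) :
    HasDerivAt (fun h => -((h - y k) / s) * Kf d s (Function.update x k h) y)
      (((x k - y k) ^ 2 / s ^ 2 - 1 / s) * Kf d s x y) (x k) := by
  have ha : HasDerivAt (fun h : ℝ => -((h - y k) / s)) (-(1 / s)) (x k) := by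
    simpa using (((hasDerivAt_id (x k)).sub_const (y k)).div_const s).fun_neg
  have hb := hasDerivAt_Kf_x d x y k hs
  have := ha.mul hb
  refine this.congr_deriv ?_
  simp only [Function.update_eq_self]
  field_simp
  ring



lemma integrable_gauss (d : ℕ) {c : ℝ} (hc : 0 < c) (x : Fin d → ℝ) :
    Integrable (fun y : Fin d → ℝ => Real.exp (-c * ∑ k, (x k - y k) ^ 2)) := by
  have e : (fun y : Fin d → ℝ => Real.exp (-c * ∑ k, (x k - y k) ^ 2))
      = fun y => ∏ k, Real.exp (-c * (x k - y k) ^ 2) := by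
    funext y
    rw [← Real.exp_sum, Finset.mul_sum]
  rw [e]
  exact Integrable.fintype_prod (f := fun k (w : ℝ) => Real.exp (-c * (x k - w) ^ 2))
    (fun k => (integrable_exp_neg_mul_sq hc).comp_sub_left (x k))

lemma poly_gauss_le {c : ℝ} (hc : 0 < c) (r : ℝ) (hr : 0 ≤ r) :
    (1 + r) ^ 2 * Real.exp (-c * r) ≤ (1 + 4 / c + 16 / c ^ 2) * Real.exp (-(c / 2) * r) := by
  have h1 : c / 2 * r ≤ Real.exp (c / 2 * r) := by
    nlinarith [Real.add_one_le_exp (c / 2 * r)]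
  have h2 : c / 4 * r ≤ Real.exp (c / 4 * r) := by
    nlinarith [Real.add_one_le_exp (c / 4 * r)]
  have h3 : Real.exp (c / 4 * r) * Real.exp (c / 4 * r) = Real.exp (c / 2 * r) := by
    rw [← Real.exp_add]; ring_nf
  have h4 : (c / 4 * r) ^ 2 ≤ Real.exp (c / 2 * r) := by
    nlinarith [Real.exp_pos (c / 4 * r), mul_nonneg (le_of_lt (by positivity : (0:ℝ) < c/4)) hr]
  have h5 : (1 : ℝ) ≤ Real.exp (c / 2 * r) := Real.one_le_exp (by positivity)
  have key : (1 + r) ^ 2 ≤ (1 + 4 / c + 16 / c ^ 2) * Real.exp (c / 2 * r) := by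
    have t1 : (4 / c) * (c / 2 * r) ≤ (4 / c) * Real.exp (c / 2 * r) :=
      mul_le_mul_of_nonneg_left h1 (by positivity)
    have t2 : (16 / c ^ 2) * ((c / 4 * r) ^ 2) ≤ (16 / c ^ 2) * Real.exp (c / 2 * r) :=
      mul_le_mul_of_nonneg_left h4 (by positivity)
    have e1 : (4 / c) * (c / 2 * r) = 2 * r := by field_simp; ring
    have e2 : (16 / c ^ 2) * ((c / 4 * r) ^ 2) = r ^ 2 := by field_simp; ring
    nlinarith [t1, t2, h5]
  calc (1 + r) ^ 2 * Real.exp (-c * r)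
      ≤ ((1 + 4 / c + 16 / c ^ 2) * Real.exp (c / 2 * r)) * Real.exp (-c * r) :=
        mul_le_mul_of_nonneg_right key (Real.exp_pos _).le
    _ = (1 + 4 / c + 16 / c ^ 2) * Real.exp (-(c / 2) * r) := by
        rw [mul_assoc, ← Real.exp_add]; ring_nf

lemma integrable_polygauss (d : ℕ) {c : ℝ} (hc : 0 < c) (x : Fin d → ℝ) :
    Integrable (fun y : Fin d → ℝ =>
      (1 + ∑ k, (x k - y k) ^ 2) ^ 2 * Real.exp (-c * ∑ k, (x k - y k) ^ 2)) := by
  apply Integrable.mono'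
    (((integrable_gauss d (by positivity : (0:ℝ) < c / 2) x)).const_mul (1 + 4 / c + 16 / c ^ 2))
  · apply Continuous.aestronglyMeasurable; fun_prop
  · filter_upwards with y
    have hQ : (0:ℝ) ≤ ∑ k, (x k - y k) ^ 2 := by positivity
    rw [Real.norm_eq_abs, abs_of_nonneg (by positivity)]
    exact poly_gauss_le hc _ hQ

lemma neg_sum_div_eq {d : ℕ} (g : Fin d → ℝ) (a : ℝ) :
    (-∑ k, g k) / a = ∑ k, -g k / a := by
  rw [← Finset.sum_neg_distrib, Finset.sum_div]

lemma integral_Kf (d : ℕ) {s : ℝ} (hs : 0 < s) (x : Fin d → ℝ) :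
    ∫ y : Fin d → ℝ, Kf d s x y = 1 := by
  have hb : (0:ℝ) < 2 * π * s := by positivity
  have e : (fun y : Fin d → ℝ => Kf d s x y)
      = fun y => ∏ k, ((2 * π * s) ^ (-(1:ℝ) / 2) * Real.exp (-(x k - y k) ^ 2 / (2 * s))) := by
    funext y; unfold Kf
    rw [Finset.prod_mul_distrib, Finset.prod_const, ← Real.exp_sum, Finset.card_univ,
      Fintype.card_fin]
    congr 1
    · rw [← Real.rpow_natCast ((2 * π * s) ^ (-(1:ℝ) / 2)) d, ← Real.rpow_mul hb.le]
      congr 1; ring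
    · congr 1; rw [neg_sum_div_eq]
  rw [e, integral_fintype_prod_volume_eq_prod
    (f := fun k (w : ℝ) => (2 * π * s) ^ (-(1:ℝ) / 2) * Real.exp (-(x k - w) ^ 2 / (2 * s)))]
  have one : ∀ k : Fin d,
      ∫ w : ℝ, (2 * π * s) ^ (-(1:ℝ) / 2) * Real.exp (-(x k - w) ^ 2 / (2 * s)) = 1 := by
    intro k
    rw [MeasureTheory.integral_const_mul]
    have e2 : ∫ w : ℝ, Real.exp (-(x k - w) ^ 2 / (2 * s))
        = ∫ w : ℝ, Real.exp (-(1 / (2 * s)) * w ^ 2) := by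
      rw [← integral_sub_left_eq_self (fun w => Real.exp (-(1 / (2 * s)) * w ^ 2)) volume (x k)]
      congr 1; funext w; congr 1; field_simp
    rw [e2, integral_gaussian]
    rw [show π / (1 / (2 * s)) = 2 * π * s by field_simp]
    rw [Real.sqrt_eq_rpow, ← Real.rpow_add hb]
    norm_num
  simp [one]

lemma hasDerivAt_Kf_s (d : ℕ) (x y : Fin d → ℝ) {s : ℝ} (hs : 0 < s) :
    HasDerivAt (fun s' => Kf d s' x y)
      (Kf d s x y * ((∑ k, (x k - y k) ^ 2) / (2 * s ^ 2) - d / (2 * s))) s := by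
  have hb : (0:ℝ) < 2 * π * s := by positivity
  set Q := ∑ k, (x k - y k) ^ 2 with hQ
  have hrw : (fun s' => Kf d s' x y)
      = fun s' => (2 * π * s') ^ (-(d : ℝ) / 2) * Real.exp ((-Q / 2) * s'⁻¹) := by
    funext s'; unfold Kf
    rw [← hQ]
    congr 1
    rw [← div_eq_mul_inv, div_div]
  rw [hrw]
  have hlin : HasDerivAt (fun s' : ℝ => 2 * π * s') (2 * π) s := by
    simpa using (hasDerivAt_id s).const_mul (2 * π)
  have h1 := hlin.rpow_const (p := -(d : ℝ) / 2) (Or.inl hb.ne')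
  have h2 : HasDerivAt (fun s' : ℝ => Real.exp ((-Q / 2) * s'⁻¹))
      (Real.exp ((-Q / 2) * s⁻¹) * ((-Q / 2) * (-(s ^ 2)⁻¹))) s :=
    (((hasDerivAt_inv hs.ne').const_mul (-Q / 2))).exp
  have := h1.mul h2
  refine this.congr_deriv ?_
  unfold Kf
  rw [← hQ, Real.rpow_sub_one hb.ne']
  have e : -Q / (2 * s) = (-Q/2) * s⁻¹ := by
    rw [← div_eq_mul_inv, div_div]
  rw [e]
  field_simp
  ring

lemma Kf_nonneg (d : ℕ) {s : ℝ} (hs : 0 < s) (x y : Fin d → ℝ) : 0 ≤ Kf d s x y := by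
  unfold Kf; positivity

-- bound for Kf with perturbed time
lemma Kf_le_of_time (d : ℕ) (x y : Fin d → ℝ) {s σ : ℝ} (hs : 0 < s)
    (h1 : s / 2 < σ) (h2 : σ < 3 * s / 2) :
    Kf d σ x y ≤ (π * s) ^ (-(d : ℝ) / 2) *
      Real.exp (-(1 / (3 * s)) * ∑ k, (x k - y k) ^ 2) := by
  have hσ : 0 < σ := lt_trans (by positivity) h1
  have hQ : (0:ℝ) ≤ ∑ k, (x k - y k) ^ 2 := by positivity
  unfold Kf
  have hA : (2 * π * σ) ^ (-(d : ℝ) / 2) ≤ (π * s) ^ (-(d : ℝ) / 2) := by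
    apply Real.rpow_le_rpow_of_nonpos (by positivity)
    · nlinarith [pi_pos]
    · have : (0:ℝ) ≤ (d : ℝ) := Nat.cast_nonneg d
      linarith
  have hB : Real.exp (-(∑ k, (x k - y k) ^ 2) / (2 * σ))
      ≤ Real.exp (-(1 / (3 * s)) * ∑ k, (x k - y k) ^ 2) := by
    apply Real.exp_le_exp.mpr
    rw [neg_div, neg_mul]
    apply neg_le_neg
    rw [one_div, inv_mul_eq_div]
    exact div_le_div_of_nonneg_left hQ (by positivity) (by linarith)
  exact mul_le_mul hA hB (Real.exp_pos _).le (by positivity)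

lemma Kf_shift_le (d : ℕ) (x y : Fin d → ℝ) (k : Fin d) {s : ℝ} (hs : 0 < s) {h h₀ : ℝ}
    (hh : |h - h₀| < 1) :
    Kf d s (Function.update x k h) y ≤
      (2 * π * s) ^ (-(d : ℝ) / 2) * Real.exp (1 / (2 * s)) *
        Real.exp (-(1 / (4 * s)) * ∑ j, (Function.update x k h₀ j - y j) ^ 2) := by
  have hδ := abs_lt.mp hh
  set A := ∑ j ∈ univ.erase k, (x j - y j) ^ 2 with hA
  have hA0 : 0 ≤ A := by positivity
  have e1 : ∑ j, (Function.update x k h j - y j) ^ 2 = A + (h - y k) ^ 2 :=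
    sum_upd d x y k h
  have e2 : ∑ j, (Function.update x k h₀ j - y j) ^ 2 = A + (h₀ - y k) ^ 2 :=
    sum_upd d x y k h₀
  unfold Kf
  rw [e1, e2]
  have hexp : Real.exp (-(A + (h - y k) ^ 2) / (2 * s))
      ≤ Real.exp (1 / (2 * s)) * Real.exp (-(1 / (4 * s)) * (A + (h₀ - y k) ^ 2)) := by
    rw [← Real.exp_add]
    apply Real.exp_le_exp.mpr
    have key : (A + (h₀ - y k) ^ 2) / 2 ≤ 1 + (A + (h - y k) ^ 2) := by
      nlinarith [sq_nonneg (2 * (h - y k) - (h₀ - y k)), sq_nonneg (h - h₀)]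
    have heq : 1 / (2 * s) + -(1 / (4 * s)) * (A + (h₀ - y k) ^ 2)
        - (-(A + (h - y k) ^ 2) / (2 * s))
        = (1 + (A + (h - y k) ^ 2) - (A + (h₀ - y k) ^ 2) / 2) / (2 * s) := by
      field_simp; ring
    have hnn : 0 ≤ (1 + (A + (h - y k) ^ 2) - (A + (h₀ - y k) ^ 2) / 2) / (2 * s) :=
      div_nonneg (by linarith) (by positivity)
    linarith
  calc (2 * π * s) ^ (-(d : ℝ) / 2) * Real.exp (-(A + (h - y k) ^ 2) / (2 * s))
      ≤ (2 * π * s) ^ (-(d : ℝ) / 2) *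
        (Real.exp (1 / (2 * s)) * Real.exp (-(1 / (4 * s)) * (A + (h₀ - y k) ^ 2))) :=
        mul_le_mul_of_nonneg_left hexp (by positivity)
    _ = _ := by ring

lemma continuous_Kf (d : ℕ) (s : ℝ) (x : Fin d → ℝ) :
    Continuous (fun y : Fin d → ℝ => Kf d s x y) := by
  unfold Kf; fun_prop

variable {d : ℕ} {f : (Fin d → ℝ) → ℝ} {M : ℝ}

lemma integrable_fKf (hbd : ∀ y, |f y| ≤ M) (hcf : Continuous f)
    {s : ℝ} (hs : 0 < s) (x : Fin d → ℝ) :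
    Integrable (fun y : Fin d → ℝ => f y * Kf d s x y) := by
  have hM0 : 0 ≤ M := le_trans (abs_nonneg _) (hbd (fun _ => 0))
  apply Integrable.mono'
    ((integrable_gauss d (by positivity : (0:ℝ) < 1 / (2 * s)) x).const_mul
      (M * (2 * π * s) ^ (-(d : ℝ) / 2)))
  · exact (hcf.mul (continuous_Kf d s x)).aestronglyMeasurable
  · filter_upwards with y
    rw [Real.norm_eq_abs, abs_mul, abs_of_nonneg (Kf_nonneg d hs x y)]
    have : Kf d s x y = (2 * π * s) ^ (-(d : ℝ) / 2)
        * Real.exp (-(1 / (2 * s)) * ∑ k, (x k - y k) ^ 2) := by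
      unfold Kf; congr 1; rw [neg_div, neg_mul, one_div, inv_mul_eq_div]
    rw [this]
    refine le_trans (mul_le_mul_of_nonneg_right (hbd y) (by positivity)) (le_of_eq (by ring))

lemma hasDerivAt_int_s (hbd : ∀ y, |f y| ≤ M) (hcf : Continuous f)
    {s : ℝ} (hs : 0 < s) (x : Fin d → ℝ) :
    Integrable (fun y : Fin d → ℝ =>
      f y * (Kf d s x y * ((∑ k, (x k - y k) ^ 2) / (2 * s ^ 2) - d / (2 * s)))) ∧
    HasDerivAt (fun s' => ∫ y : Fin d → ℝ, f y * Kf d s' x y)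
      (∫ y : Fin d → ℝ,
        f y * (Kf d s x y * ((∑ k, (x k - y k) ^ 2) / (2 * s ^ 2) - d / (2 * s)))) s := by
  have hM0 : 0 ≤ M := le_trans (abs_nonneg _) (hbd (fun _ => 0))
  refine hasDerivAt_integral_of_dominated_loc_of_deriv_le
    (F := fun σ (y : Fin d → ℝ) => f y * Kf d σ x y)
    (F' := fun σ (y : Fin d → ℝ) =>
      f y * (Kf d σ x y * ((∑ k, (x k - y k) ^ 2) / (2 * σ ^ 2) - d / (2 * σ))))
    (bound := fun y => (M * ((π * s) ^ (-(d : ℝ) / 2) * (2 / s ^ 2 + d / s))) *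
      ((1 + ∑ k, (x k - y k) ^ 2) ^ 2 *
        Real.exp (-(1 / (3 * s)) * ∑ k, (x k - y k) ^ 2)))
    (Metric.ball_mem_nhds s (by positivity : (0:ℝ) < s / 2)) ?_ ?_ ?_ ?_ ?_ ?_
  · exact Eventually.of_forall fun σ =>
      (hcf.mul (continuous_Kf d σ x)).aestronglyMeasurable
  · exact integrable_fKf hbd hcf hs x
  · have c1 : Continuous fun y : Fin d → ℝ =>
        (∑ k, (x k - y k) ^ 2) / (2 * s ^ 2) - d / (2 * s) := by fun_prop
    exact (hcf.mul ((continuous_Kf d s x).mul c1)).aestronglyMeasurable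
  · refine Eventually.of_forall fun y σ hσball => ?_
    have h' := abs_lt.mp (by simpa [Real.dist_eq] using hσball)
    have hσ1 : s / 2 < σ := by linarith [h'.1]
    have hσ2 : σ < 3 * s / 2 := by linarith [h'.2]
    have hσ0 : 0 < σ := by linarith
    set Q := ∑ k, (x k - y k) ^ 2 with hQdef
    have hQ0 : 0 ≤ Q := by positivity
    have hK : Kf d σ x y ≤ (π * s) ^ (-(d : ℝ) / 2) * Real.exp (-(1 / (3 * s)) * Q) :=
      Kf_le_of_time d x y hs hσ1 hσ2
    have hr : |Q / (2 * σ ^ 2) - d / (2 * σ)| ≤ (2 / s ^ 2 + d / s) * (1 + Q) ^ 2 := by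
      have hq2 : 0 ≤ Q / (2 * σ ^ 2) := by positivity
      have hd0 : 0 ≤ (d : ℝ) / (2 * σ) := by positivity
      have b1 : |Q / (2 * σ ^ 2) - d / (2 * σ)| ≤ Q / (2 * σ ^ 2) + d / (2 * σ) :=
        abs_le.mpr ⟨by linarith, by linarith⟩
      have b2 : Q / (2 * σ ^ 2) ≤ 2 / s ^ 2 * Q := by
        have h1 : Q / (2 * σ ^ 2) ≤ Q / (s ^ 2 / 2) :=
          div_le_div_of_nonneg_left hQ0 (by positivity) (by nlinarith)
        have h2 : Q / (s ^ 2 / 2) = 2 / s ^ 2 * Q := by field_simp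
        linarith
      have b3 : (d : ℝ) / (2 * σ) ≤ (d : ℝ) / s :=
        div_le_div_of_nonneg_left (Nat.cast_nonneg d) hs (by linarith)
      have h5 : Q ≤ (1 + Q) ^ 2 := by nlinarith
      have h6 : (1 : ℝ) ≤ (1 + Q) ^ 2 := by nlinarith
      have h7 := mul_le_mul_of_nonneg_left h5 (by positivity : (0:ℝ) ≤ 2 / s ^ 2)
      have h8 := mul_le_mul_of_nonneg_left h6 (by positivity : (0:ℝ) ≤ (d : ℝ) / s)
      nlinarith
    rw [Real.norm_eq_abs, abs_mul, abs_mul, abs_of_nonneg (Kf_nonneg d hσ0 x y)]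
    calc |f y| * (Kf d σ x y * |Q / (2 * σ ^ 2) - d / (2 * σ)|)
        ≤ M * (((π * s) ^ (-(d : ℝ) / 2) * Real.exp (-(1 / (3 * s)) * Q)) *
            ((2 / s ^ 2 + d / s) * (1 + Q) ^ 2)) := by
          apply mul_le_mul (hbd y)
            (mul_le_mul hK hr (abs_nonneg _) (by positivity))
            (mul_nonneg (Kf_nonneg d hσ0 x y) (abs_nonneg _)) hM0
      _ = _ := by ring
  · exact ((integrable_polygauss d
      (by positivity : (0:ℝ) < 1 / (3 * s)) x).const_mul _)
  · refine Eventually.of_forall fun y σ hσball => ?_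
    have h' := abs_lt.mp (by simpa [Real.dist_eq] using hσball)
    have hσ0 : 0 < σ := by linarith [h'.1]
    exact (hasDerivAt_Kf_s d x y hσ0).const_mul (f y)

lemma hasDerivAt_int_x (hbd : ∀ y, |f y| ≤ M) (hcf : Continuous f)
    {s : ℝ} (hs : 0 < s) (x : Fin d → ℝ) (k : Fin d) (h₀ : ℝ) :
    Integrable (fun y : Fin d → ℝ =>
      f y * (-((h₀ - y k) / s) * Kf d s (Function.update x k h₀) y)) ∧
    HasDerivAt (fun h => ∫ y : Fin d → ℝ, f y * Kf d s (Function.update x k h) y)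
      (∫ y : Fin d → ℝ,
        f y * (-((h₀ - y k) / s) * Kf d s (Function.update x k h₀) y)) h₀ := by
  have hM0 : 0 ≤ M := le_trans (abs_nonneg _) (hbd (fun _ => 0))
  refine hasDerivAt_integral_of_dominated_loc_of_deriv_le
    (F := fun h (y : Fin d → ℝ) => f y * Kf d s (Function.update x k h) y)
    (F' := fun h (y : Fin d → ℝ) =>
      f y * (-((h - y k) / s) * Kf d s (Function.update x k h) y))
    (bound := fun y => (M * (2 / s) * ((2 * π * s) ^ (-(d : ℝ) / 2) *
        Real.exp (1 / (2 * s)))) *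
      ((1 + ∑ j, (Function.update x k h₀ j - y j) ^ 2) ^ 2 *
        Real.exp (-(1 / (4 * s)) * ∑ j, (Function.update x k h₀ j - y j) ^ 2)))
    (Metric.ball_mem_nhds h₀ one_pos) ?_ ?_ ?_ ?_ ?_ ?_
  · exact Eventually.of_forall fun h =>
      (hcf.mul (continuous_Kf d s (Function.update x k h))).aestronglyMeasurable
  · exact integrable_fKf hbd hcf hs (Function.update x k h₀)
  · have c1 : Continuous fun y : Fin d → ℝ => -((h₀ - y k) / s) := by fun_prop
    exact (hcf.mul (c1.mul (continuous_Kf d s (Function.update x k h₀)))).aestronglyMeasurable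
  · refine Eventually.of_forall fun y h hball => ?_
    have hh : |h - h₀| < 1 := by simpa [Real.dist_eq] using hball
    set Q := ∑ j, (Function.update x k h₀ j - y j) ^ 2 with hQdef
    have hQ0 : 0 ≤ Q := by positivity
    have t1 : (h₀ - y k) ^ 2 ≤ Q := by
      have := Finset.single_le_sum
        (f := fun j => (Function.update x k h₀ j - y j) ^ 2)
        (fun i _ => by positivity) (mem_univ k)
      simpa using this
    have t2 : |h - y k| ≤ 2 * (1 + Q) := by
      have e : |h - y k| ≤ |h₀ - y k| + 1 := by
        calc |h - y k| = |(h₀ - y k) + (h - h₀)| := by ring_nf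
          _ ≤ |h₀ - y k| + |h - h₀| := abs_add_le _ _
          _ ≤ |h₀ - y k| + 1 := by linarith [hh.le]
      have e2 : |h₀ - y k| ≤ 1 + (h₀ - y k) ^ 2 := by
        nlinarith [sq_nonneg (|h₀ - y k| - 1), sq_abs (h₀ - y k), abs_nonneg (h₀ - y k)]
      linarith
    have t3 := Kf_shift_le d x y k hs hh
    rw [Real.norm_eq_abs, abs_mul, abs_mul, abs_neg, abs_div,
      abs_of_nonneg hs.le, abs_of_nonneg (Kf_nonneg d hs _ y)]
    have t4 : |h - y k| / s ≤ 2 / s * (1 + Q) ^ 2 := by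
      have : |h - y k| ≤ 2 * (1 + Q) ^ 2 := by nlinarith
      calc |h - y k| / s ≤ (2 * (1 + Q) ^ 2) / s := by gcongr
        _ = 2 / s * (1 + Q) ^ 2 := by ring
    calc |f y| * (|h - y k| / s * Kf d s (Function.update x k h) y)
        ≤ M * ((2 / s * (1 + Q) ^ 2) *
            ((2 * π * s) ^ (-(d : ℝ) / 2) * Real.exp (1 / (2 * s)) *
              Real.exp (-(1 / (4 * s)) * Q))) := by
          apply mul_le_mul (hbd y)
            (mul_le_mul t4 t3 (Kf_nonneg d hs _ y) (by positivity))
            (mul_nonneg (by positivity) (Kf_nonneg d hs _ y)) hM0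
      _ = _ := by ring
  · exact ((integrable_polygauss d
      (by positivity : (0:ℝ) < 1 / (4 * s)) (Function.update x k h₀)).const_mul _)
  · refine Eventually.of_forall fun y h _ => ?_
    have base : HasDerivAt (fun h' => Kf d s (Function.update x k h') y)
        (-((h - y k) / s) * Kf d s (Function.update x k h) y) h := by
      have := hasDerivAt_Kf_x d (Function.update x k h) y k hs
      simpa [Function.update_idem] using this
    exact base.const_mul (f y)


lemma hasDerivAt_int_xx (hbd : ∀ y, |f y| ≤ M) (hcf : Continuous f)
    {s : ℝ} (hs : 0 < s) (x : Fin d → ℝ) (k : Fin d) :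
    Integrable (fun y : Fin d → ℝ =>
      f y * (((x k - y k) ^ 2 / s ^ 2 - 1 / s) * Kf d s x y)) ∧
    HasDerivAt (fun h => ∫ y : Fin d → ℝ,
        f y * (-((h - y k) / s) * Kf d s (Function.update x k h) y))
      (∫ y : Fin d → ℝ,
        f y * (((x k - y k) ^ 2 / s ^ 2 - 1 / s) * Kf d s x y)) (x k) := by
  have hM0 : 0 ≤ M := le_trans (abs_nonneg _) (hbd (fun _ => 0))
  have main : Integrable (fun y : Fin d → ℝ =>
      f y * (((x k - y k) ^ 2 / s ^ 2 - 1 / s)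
        * Kf d s (Function.update x k (x k)) y)) volume ∧
      HasDerivAt (fun h => ∫ y : Fin d → ℝ,
          f y * (-((h - y k) / s) * Kf d s (Function.update x k h) y))
        (∫ y : Fin d → ℝ,
          f y * (((x k - y k) ^ 2 / s ^ 2 - 1 / s)
            * Kf d s (Function.update x k (x k)) y)) (x k) := by
    refine hasDerivAt_integral_of_dominated_loc_of_deriv_le
      (F := fun h (y : Fin d → ℝ) =>
        f y * (-((h - y k) / s) * Kf d s (Function.update x k h) y))
      (F' := fun h (y : Fin d → ℝ) =>
        f y * (((h - y k) ^ 2 / s ^ 2 - 1 / s) * Kf d s (Function.update x k h) y))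
      (bound := fun y => (M * (2 / s ^ 2 + 1 / s) * ((2 * π * s) ^ (-(d : ℝ) / 2) *
          Real.exp (1 / (2 * s)))) *
        ((1 + ∑ j, (x j - y j) ^ 2) ^ 2 *
          Real.exp (-(1 / (4 * s)) * ∑ j, (x j - y j) ^ 2)))
      (Metric.ball_mem_nhds (x k) one_pos) ?_ ?_ ?_ ?_ ?_ ?_
    · refine Eventually.of_forall fun h => ?_
      have c1 : Continuous fun y : Fin d → ℝ => -((h - y k) / s) := by fun_prop
      exact (hcf.mul (c1.mul
        (continuous_Kf d s (Function.update x k h)))).aestronglyMeasurable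
    · exact (hasDerivAt_int_x hbd hcf hs x k (x k)).1
    · have c1 : Continuous fun y : Fin d → ℝ => (x k - y k) ^ 2 / s ^ 2 - 1 / s := by
        fun_prop
      exact (hcf.mul (c1.mul
        (continuous_Kf d s (Function.update x k (x k))))).aestronglyMeasurable
    · refine Eventually.of_forall fun y h hball => ?_
      have hh : |h - x k| < 1 := by simpa [Real.dist_eq] using hball
      set Q := ∑ j, (x j - y j) ^ 2 with hQdef
      have hQ0 : 0 ≤ Q := by positivity
      have t1 : (x k - y k) ^ 2 ≤ Q := by
        have := Finset.single_le_sum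
          (f := fun j => (x j - y j) ^ 2) (fun i _ => by positivity) (mem_univ k)
        simpa using this
      have t3 := Kf_shift_le d x y k hs hh
      simp only [Function.update_eq_self] at t3
      have hh2 : (h - x k) ^ 2 < 1 := by nlinarith [abs_lt.mp hh]
      have t2 : (h - y k) ^ 2 ≤ 2 * Q + 2 := by
        nlinarith [sq_nonneg ((h - y k) - 2 * (x k - y k))]
      have tr : |(h - y k) ^ 2 / s ^ 2 - 1 / s| ≤ (2 / s ^ 2 + 1 / s) * (1 + Q) ^ 2 := by
        have hq2 : 0 ≤ (h - y k) ^ 2 / s ^ 2 := by positivity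
        have hd0 : 0 ≤ 1 / s := by positivity
        have b1 : |(h - y k) ^ 2 / s ^ 2 - 1 / s| ≤ (h - y k) ^ 2 / s ^ 2 + 1 / s :=
          abs_le.mpr ⟨by linarith, by linarith⟩
        have b2 : (h - y k) ^ 2 / s ^ 2 ≤ (2 * Q + 2) / s ^ 2 := by gcongr
        have h6 : (1 : ℝ) ≤ (1 + Q) ^ 2 := by nlinarith
        have b3 : (2 * Q + 2) / s ^ 2 ≤ 2 / s ^ 2 * (1 + Q) ^ 2 := by
          have h5 : 2 * Q + 2 ≤ 2 * (1 + Q) ^ 2 := by nlinarith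
          calc (2 * Q + 2) / s ^ 2 ≤ (2 * (1 + Q) ^ 2) / s ^ 2 := by gcongr
            _ = 2 / s ^ 2 * (1 + Q) ^ 2 := by ring
        nlinarith [mul_le_mul_of_nonneg_left h6 hd0]
      rw [Real.norm_eq_abs, abs_mul, abs_mul, abs_of_nonneg (Kf_nonneg d hs _ y)]
      calc |f y| * (|(h - y k) ^ 2 / s ^ 2 - 1 / s| * Kf d s (Function.update x k h) y)
          ≤ M * (((2 / s ^ 2 + 1 / s) * (1 + Q) ^ 2) *
              ((2 * π * s) ^ (-(d : ℝ) / 2) * Real.exp (1 / (2 * s)) *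
                Real.exp (-(1 / (4 * s)) * Q))) := by
            apply mul_le_mul (hbd y)
              (mul_le_mul tr t3 (Kf_nonneg d hs _ y) (by positivity))
              (mul_nonneg (abs_nonneg _) (Kf_nonneg d hs _ y)) hM0
        _ = _ := by ring
    · exact ((integrable_polygauss d
        (by positivity : (0:ℝ) < 1 / (4 * s)) x).const_mul _)
    · refine Eventually.of_forall fun y h _ => ?_
      have base : HasDerivAt
          (fun h' => -((h' - y k) / s) * Kf d s (Function.update x k h') y)
          (((h - y k) ^ 2 / s ^ 2 - 1 / s) * Kf d s (Function.update x k h) y) h := by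
        have := hasDerivAt_Kf_xx d (Function.update x k h) y k hs
        simpa [Function.update_idem] using this
      exact base.const_mul (f y)
  simp only [Function.update_eq_self] at main
  exact main

lemma pd_v (hbd : ∀ y, |f y| ≤ M) (hcf : Continuous f)
    {s : ℝ} (hs : 0 < s) (x : Fin d → ℝ) (k : Fin d) :
    pd k (fun x' => ∫ y : Fin d → ℝ, f y * Kf d s x' y) x
      = ∫ y : Fin d → ℝ, f y * (-((x k - y k) / s) * Kf d s x y) := by
  have h2 := (hasDerivAt_int_x hbd hcf hs x k (x k)).2
  simp only [Function.update_eq_self] at h2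
  exact h2.deriv

lemma pd_pd_v (hbd : ∀ y, |f y| ≤ M) (hcf : Continuous f)
    {s : ℝ} (hs : 0 < s) (x : Fin d → ℝ) (k : Fin d) :
    pd k (pd k (fun x' => ∫ y : Fin d → ℝ, f y * Kf d s x' y)) x
      = ∫ y : Fin d → ℝ,
          f y * (((x k - y k) ^ 2 / s ^ 2 - 1 / s) * Kf d s x y) := by
  have e : pd k (fun x' => ∫ y : Fin d → ℝ, f y * Kf d s x' y)
      = fun x' => ∫ y : Fin d → ℝ, f y * (-((x' k - y k) / s) * Kf d s x' y) :=
    funext fun x' => pd_v hbd hcf hs x' k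
  rw [e]
  unfold pd
  have e2 : (fun h : ℝ => ∫ y : Fin d → ℝ,
        f y * (-((Function.update x k h k - y k) / s)
          * Kf d s (Function.update x k h) y))
      = fun h : ℝ => ∫ y : Fin d → ℝ,
          f y * (-((h - y k) / s) * Kf d s (Function.update x k h) y) := by
    funext h
    simp only [Function.update_self]
  rw [e2]
  exact (hasDerivAt_int_xx hbd hcf hs x k).2.deriv

lemma lap_v (hbd : ∀ y, |f y| ≤ M) (hcf : Continuous f)
    {s : ℝ} (hs : 0 < s) (x : Fin d → ℝ) :
    lap (fun x' => ∫ y : Fin d → ℝ, f y * Kf d s x' y) x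
      = ∫ y : Fin d → ℝ, f y * (Kf d s x y *
          ((∑ k, (x k - y k) ^ 2) / s ^ 2 - d / s)) := by
  unfold lap
  rw [Finset.sum_congr rfl (fun k _ => pd_pd_v hbd hcf hs x k)]
  rw [← integral_finset_sum univ (fun k _ => (hasDerivAt_int_xx hbd hcf hs x k).1)]
  congr 1
  funext y
  rw [← Finset.mul_sum, ← Finset.sum_mul]
  have e : ∑ k, ((x k - y k) ^ 2 / s ^ 2 - 1 / s)
      = (∑ k, (x k - y k) ^ 2) / s ^ 2 - d / s := by
    rw [Finset.sum_sub_distrib, ← Finset.sum_div, Finset.sum_const, card_univ,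
      Fintype.card_fin, nsmul_eq_mul]
    ring
  rw [e]
  ring

lemma hasDerivAt_v_heat (hbd : ∀ y, |f y| ≤ M) (hcf : Continuous f)
    {s : ℝ} (hs : 0 < s) (x : Fin d → ℝ) :
    HasDerivAt (fun s' => ∫ y : Fin d → ℝ, f y * Kf d s' x y)
      ((1 / 2) * lap (fun x' => ∫ y : Fin d → ℝ, f y * Kf d s x' y) x) s := by
  have h1 := (hasDerivAt_int_s hbd hcf hs x).2
  have e : (1 / 2 : ℝ) * lap (fun x' => ∫ y : Fin d → ℝ, f y * Kf d s x' y) x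
      = ∫ y : Fin d → ℝ,
          f y * (Kf d s x y * ((∑ k, (x k - y k) ^ 2) / (2 * s ^ 2) - d / (2 * s))) := by
    rw [lap_v hbd hcf hs x, ← integral_const_mul]
    congr 1
    funext y
    ring
  rw [e]
  exact h1

lemma integrable_Kf (hs : (0:ℝ) < s) (x : Fin d → ℝ) :
    Integrable (fun y : Fin d → ℝ => Kf d s x y) := by
  have : (fun y : Fin d → ℝ => Kf d s x y)
      = fun y : Fin d → ℝ => (1 : ℝ) * Kf d s x y := by funext y; rw [one_mul]
  rw [this]
  exact integrable_fKf (f := fun _ => (1:ℝ)) (M := 1)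
    (fun y => by simp) continuous_const hs x

lemma abs_v_le (hbd : ∀ y, |f y| ≤ M) (hcf : Continuous f)
    {s : ℝ} (hs : 0 < s) (x : Fin d → ℝ) :
    |∫ y : Fin d → ℝ, f y * Kf d s x y| ≤ M := by
  have hM0 : 0 ≤ M := le_trans (abs_nonneg _) (hbd (fun _ => 0))
  have h1 : |∫ y : Fin d → ℝ, f y * Kf d s x y|
      ≤ ∫ y : Fin d → ℝ, ‖f y * Kf d s x y‖ := by
    simpa [Real.norm_eq_abs] using
      norm_integral_le_integral_norm (fun y : Fin d → ℝ => f y * Kf d s x y)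
  have h2 : ∫ y : Fin d → ℝ, ‖f y * Kf d s x y‖
      ≤ ∫ y : Fin d → ℝ, M * Kf d s x y := by
    apply integral_mono_of_nonneg (Eventually.of_forall fun y => norm_nonneg _)
      ((integrable_Kf hs x).const_mul M)
    refine Eventually.of_forall fun y => ?_
    show ‖f y * Kf d s x y‖ ≤ M * Kf d s x y
    rw [Real.norm_eq_abs, abs_mul, abs_of_nonneg (Kf_nonneg d hs x y)]
    exact mul_le_mul_of_nonneg_right (hbd y) (Kf_nonneg d hs x y)
  have h3 : ∫ y : Fin d → ℝ, M * Kf d s x y = M := by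
    rw [integral_const_mul, integral_Kf d hs x, mul_one]
  linarith

end BS

/-- `u(t,x) = ∫ f(y) K^{BS}(t;x,y) dy` is a bounded solution of the
nonlinear second order PDE `∏_j ∂u/∂t_j = ((t₁⋯t_n)^{n-1}/2ⁿ)(Δ_x u)ⁿ`. -/
theorem brownian_sheet_nonlinear_pde
    (n d : ℕ) (hn : 1 ≤ n) (hd : 1 ≤ d)
    (f : (Fin d → ℝ) → ℝ) (hb : ∃ M, ∀ y, |f y| ≤ M) (hc : Continuous f)
    (u : (Fin n → ℝ) → (Fin d → ℝ) → ℝ)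
    (hu : ∀ t x, u t x = ∫ y : Fin d → ℝ, f y * Kbs n d t x y) :
    (∃ M, ∀ (t : Fin n → ℝ) (x : Fin d → ℝ), (∀ i, 0 < t i) → |u t x| ≤ M) ∧
    ∀ (t : Fin n → ℝ), (∀ i, 0 < t i) → ∀ x : Fin d → ℝ,
      (∏ j, pd j (fun t' => u t' x) t)
        = ((∏ i, t i) ^ (n - 1) / 2 ^ n) * (lap (u t) x) ^ n := by
  obtain ⟨M, hbd⟩ := hb
  have huK : ∀ (t : Fin n → ℝ) (x : Fin d → ℝ),
      u t x = ∫ y : Fin d → ℝ, f y * BS.Kf d (∏ i, t i) x y := hu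
  constructor
  · refine ⟨M, fun t x ht => ?_⟩
    have hs : 0 < ∏ i, t i := Finset.prod_pos fun i _ => ht i
    rw [huK]
    exact BS.abs_v_le hbd hc hs x
  · intro t ht x
    set s := ∏ i, t i with hsdef
    have hs : 0 < s := Finset.prod_pos fun i _ => ht i
    set L := lap (fun x' => ∫ y : Fin d → ℝ, f y * BS.Kf d s x' y) x with hL
    have hut : u t = fun x' => ∫ y : Fin d → ℝ, f y * BS.Kf d s x' y :=
      funext fun x' => huK t x'
    -- each t-partial
    have hpd : ∀ j : Fin n, pd j (fun t' => u t' x) t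
        = ((1 / 2) * L) * ∏ i ∈ univ.erase j, t i := by
      intro j
      set c := ∏ i ∈ univ.erase j, t i with hcj
      have efun : (fun h : ℝ => u (Function.update t j h) x)
          = fun h : ℝ => ∫ y : Fin d → ℝ, f y * BS.Kf d (h * c) x y := by
        funext h
        rw [huK, Finset.prod_update_of_mem (mem_univ j), Finset.sdiff_singleton_eq_erase]
      have hmul : HasDerivAt (fun h : ℝ => h * c) c (t j) := hasDerivAt_mul_const c
      have hts : t j * c = s := by
        rw [hcj, hsdef]
        exact Finset.mul_prod_erase univ t (mem_univ j)
      have hD : HasDerivAt (fun s' => ∫ y : Fin d → ℝ, f y * BS.Kf d s' x y)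
          ((1 / 2) * L) (t j * c) := by
        rw [hts]
        exact BS.hasDerivAt_v_heat hbd hc hs x
      have hchain := hD.comp (t j) hmul
      unfold pd
      rw [efun]
      have : (fun h : ℝ => ∫ y : Fin d → ℝ, f y * BS.Kf d (h * c) x y)
          = (fun s' => ∫ y : Fin d → ℝ, f y * BS.Kf d s' x y) ∘ (fun h : ℝ => h * c) :=
        rfl
      rw [this]
      exact hchain.deriv
    have hprodc : ∏ j : Fin n, ∏ i ∈ univ.erase j, t i = s ^ (n - 1) := by
      have h2 : s * ∏ j : Fin n, ∏ i ∈ univ.erase j, t i = s * s ^ (n - 1) := by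
        calc s * ∏ j : Fin n, ∏ i ∈ univ.erase j, t i
            = ∏ j : Fin n, (t j * ∏ i ∈ univ.erase j, t i) := by
              rw [Finset.prod_mul_distrib, ← hsdef]
          _ = ∏ _j : Fin n, s := Finset.prod_congr rfl
              (fun j _ => Finset.mul_prod_erase univ t (mem_univ j))
          _ = s ^ n := by rw [Finset.prod_const, card_univ, Fintype.card_fin]
          _ = s * s ^ (n - 1) := by
              conv_lhs => rw [show n = (n - 1) + 1 from (Nat.succ_pred_eq_of_pos hn).symm]
              rw [pow_succ']
      exact mul_left_cancel₀ hs.ne' h2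
    calc ∏ j, pd j (fun t' => u t' x) t
        = ∏ j : Fin n, (((1 / 2) * L) * ∏ i ∈ univ.erase j, t i) :=
          Finset.prod_congr rfl fun j _ => hpd j
      _ = ((1 / 2) * L) ^ n * s ^ (n - 1) := by
          rw [Finset.prod_mul_distrib, Finset.prod_const, card_univ, Fintype.card_fin,
            hprodc]
      _ = (s ^ (n - 1) / 2 ^ n) * (lap (u t) x) ^ n := by
          rw [hut, ← hL, mul_pow, one_div, inv_pow]
          ring
end
end
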